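/- Let U ⊆ ℝⁿ be open, p₀ ∈ U, let X₁,…,X_r be linearly independent real-valued smooth vector fields on U, and let 𝒟 be the C^∞(U)-module of smooth vector fields generated by X₁,…,X_r. If f, g are germs of real-valued smooth functions at p₀ with 0 ≤ f ≤ g on a neighborhood of p₀ and f(p₀) = g(p₀), then ν_𝒟(f)(p₀) ≥ ν_𝒟(g)(p₀). -/

import Mathlib

open Topology

/-- ℝⁿ as a Pi type. -/
abbrev Rn (n : ℕ) := Fin n → ℝ

/-- The action of a vector field `Y` on a function `f` : `(Y f)(x) = df_x(Y(x))`. -/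
noncomputable def vfApply {n : ℕ} {E : Type*} [NormedAddCommGroup E] [NormedSpace ℝ E]
    (Y : Rn n → Rn n) (f : Rn n → E) : Rn n → E :=
  fun x => fderiv ℝ f x (Y x)

section Toolkit
variable {n : ℕ} {E F : Type*} [NormedAddCommGroup E] [NormedSpace ℝ E]
  [NormedAddCommGroup F] [NormedSpace ℝ F]

theorem contDiff_fderiv_apply {f : E → F} {g : E → E} (hf : ContDiff ℝ (⊤:ℕ∞) f)
    (hg : ContDiff ℝ (⊤:ℕ∞) g) : ContDiff ℝ (⊤:ℕ∞) (fun x => fderiv ℝ f x (g x)) :=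
  ((contDiff_infty_iff_fderiv.1 hf).2.clm_apply hg)

theorem vfApply_contDiff {Y : Rn n → Rn n} {f : Rn n → E} (hY : ContDiff ℝ (⊤:ℕ∞) Y)
    (hf : ContDiff ℝ (⊤:ℕ∞) f) : ContDiff ℝ (⊤:ℕ∞) (vfApply Y f) :=
  contDiff_fderiv_apply hf hY

theorem contDiff_deriv1 {f : ℝ → E} (hf : ContDiff ℝ (⊤:ℕ∞) f) :
    ContDiff ℝ (⊤:ℕ∞) (deriv f) := (contDiff_infty_iff_deriv.1 hf).2

end Toolkit

section OneD
variable {E F G : Type*} [NormedAddCommGroup E] [NormedSpace ℝ E]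
  [NormedAddCommGroup F] [NormedSpace ℝ F] [NormedAddCommGroup G] [NormedSpace ℝ G]

theorem ContDiff.diffble {f : E → F} (hf : ContDiff ℝ (⊤:ℕ∞) f) : Differentiable ℝ f :=
  hf.differentiable (by simp)

theorem hasDerivAt_line {G : E → F} (p v : E) (s₀ : ℝ) (hG : DifferentiableAt ℝ G (p + s₀ • v)) :
    HasDerivAt (fun s : ℝ => G (p + s • v)) (fderiv ℝ G (p + s₀ • v) v) s₀ := by
  have hline : HasDerivAt (fun s : ℝ => p + s • v) v s₀ := by
    simpa using ((hasDerivAt_id s₀).smul_const v).const_add p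
  exact (hG.hasFDerivAt.comp_hasDerivAt s₀ hline)

theorem deriv_line {G : E → F} (p v : E) (s₀ : ℝ) (hG : DifferentiableAt ℝ G (p + s₀ • v)) :
    deriv (fun s : ℝ => G (p + s • v)) s₀ = fderiv ℝ G (p + s₀ • v) v :=
  (hasDerivAt_line p v s₀ hG).deriv

theorem contDiff_line {G : E → F} (hG : ContDiff ℝ (⊤:ℕ∞) G) (p v : E) :
    ContDiff ℝ (⊤:ℕ∞) (fun s : ℝ => G (p + s • v)) :=
  hG.comp (contDiff_const.add (contDiff_id.smul contDiff_const))

theorem natCast_le_inf (n : ℕ) : (n : WithTop ℕ∞) ≤ ((⊤:ℕ∞) : WithTop ℕ∞) := by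
  exact_mod_cast (le_top : (n:ℕ∞) ≤ ⊤)

theorem ContDiff.cdOn {f : E → F} (hf : ContDiff ℝ (⊤:ℕ∞) f) (n : ℕ) :
    ContDiffOn ℝ n f Set.univ := (hf.of_le (natCast_le_inf n)).contDiffOn

theorem iteratedDeriv_add' {n : ℕ} {f g : ℝ → F} (hf : ContDiff ℝ (⊤:ℕ∞) f)
    (hg : ContDiff ℝ (⊤:ℕ∞) g) (x : ℝ) :
    iteratedDeriv n (fun t => f t + g t) x = iteratedDeriv n f x + iteratedDeriv n g x := by
  have := iteratedDerivWithin_add (Set.mem_univ x) uniqueDiffOn_univ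
    (f := f) (g := g) ((hf.cdOn n) x (Set.mem_univ x)) ((hg.cdOn n) x (Set.mem_univ x))
  simpa [iteratedDerivWithin_univ, Pi.add_def] using this

end OneD

section Jets
variable {E F G : Type*} [NormedAddCommGroup E] [NormedSpace ℝ E]
  [NormedAddCommGroup F] [NormedSpace ℝ F] [NormedAddCommGroup G] [NormedSpace ℝ G]

theorem jet_pair_right (J : ℕ) : ∀ (u : ℝ → F →L[ℝ] G) (v : ℝ → F),
    ContDiff ℝ (⊤:ℕ∞) u → ContDiff ℝ (⊤:ℕ∞) v → (∀ i, i ≤ J → iteratedDeriv i v 0 = 0) →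
    ∀ j, j ≤ J → iteratedDeriv j (fun t => u t (v t)) 0 = 0 := by
  induction J with
  | zero =>
    intro u v hu hv hjet j hj
    rw [Nat.le_zero] at hj; subst hj
    have h0 : v 0 = 0 := by simpa [iteratedDeriv_zero] using hjet 0 le_rfl
    simp [iteratedDeriv_zero, h0]
  | succ J IH =>
    intro u v hu hv hjet j hj
    match j with
    | 0 =>
      have h0 : v 0 = 0 := by simpa [iteratedDeriv_zero] using hjet 0 (Nat.zero_le _)
      simp [iteratedDeriv_zero, h0]
    | (i+1) =>
      have hi : i ≤ J := Nat.succ_le_succ_iff.mp hj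
      rw [iteratedDeriv_succ']
      have hd : deriv (fun t => u t (v t)) = fun t => (deriv u t) (v t) + (u t) (deriv v t) := by
        funext t; exact deriv_clm_apply (hu.diffble t) (hv.diffble t)
      rw [hd, iteratedDeriv_add' ((contDiff_deriv1 hu).clm_apply hv) (hu.clm_apply (contDiff_deriv1 hv))]
      have h1 := IH (deriv u) v (contDiff_deriv1 hu) hv
        (fun i' hi' => hjet i' (hi'.trans (Nat.le_succ J))) i hi
      have h2 := IH u (deriv v) hu (contDiff_deriv1 hv)
        (fun i' hi' => by rw [← iteratedDeriv_succ']; exact hjet (i'+1) (Nat.succ_le_succ hi')) i hi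
      rw [h1, h2, add_zero]

theorem jet_pair_left (J : ℕ) : ∀ (u : ℝ → F →L[ℝ] G) (v : ℝ → F),
    ContDiff ℝ (⊤:ℕ∞) u → ContDiff ℝ (⊤:ℕ∞) v → (∀ i, i ≤ J → iteratedDeriv i u 0 = 0) →
    ∀ j, j ≤ J → iteratedDeriv j (fun t => u t (v t)) 0 = 0 := by
  induction J with
  | zero =>
    intro u v hu hv hjet j hj
    rw [Nat.le_zero] at hj; subst hj
    have h0 : u 0 = 0 := by simpa [iteratedDeriv_zero] using hjet 0 le_rfl
    simp [iteratedDeriv_zero, h0]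
  | succ J IH =>
    intro u v hu hv hjet j hj
    match j with
    | 0 =>
      have h0 : u 0 = 0 := by simpa [iteratedDeriv_zero] using hjet 0 (Nat.zero_le _)
      simp [iteratedDeriv_zero, h0]
    | (i+1) =>
      have hi : i ≤ J := Nat.succ_le_succ_iff.mp hj
      rw [iteratedDeriv_succ']
      have hd : deriv (fun t => u t (v t)) = fun t => (deriv u t) (v t) + (u t) (deriv v t) := by
        funext t; exact deriv_clm_apply (hu.diffble t) (hv.diffble t)
      rw [hd, iteratedDeriv_add' ((contDiff_deriv1 hu).clm_apply hv) (hu.clm_apply (contDiff_deriv1 hv))]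
      have h1 := IH (deriv u) v (contDiff_deriv1 hu) hv
        (fun i' hi' => by rw [← iteratedDeriv_succ']; exact hjet (i'+1) (Nat.succ_le_succ hi')) i hi
      have h2 := IH u (deriv v) hu (contDiff_deriv1 hv)
        (fun i' hi' => hjet i' (hi'.trans (Nat.le_succ J))) i hi
      rw [h1, h2, add_zero]

theorem iteratedDeriv_monomial (c : F) : ∀ i k, i ≤ k →
    iteratedDeriv i (fun t : ℝ => t^k • c) = fun t => ((k.descFactorial i : ℝ) * t^(k-i)) • c := by
  intro i
  induction i with
  | zero => intro k _; simp [iteratedDeriv_zero]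
  | succ i IH =>
    intro k hik
    have hik' : i ≤ k := (Nat.le_succ i).trans hik
    rw [iteratedDeriv_succ, IH k hik']
    funext t
    have hdp : DifferentiableAt ℝ (fun t : ℝ => (k.descFactorial i : ℝ) * t^(k-i)) t :=
      ((differentiable_pow (k-i)).const_mul _) t
    rw [deriv_smul_const hdp, deriv_const_mul _ ((differentiable_pow (k-i)) t), deriv_pow_field]
    have hk1 : 1 ≤ k - i := Nat.le_sub_of_add_le (by omega)
    have hsub : k - i - 1 = k - (i+1) := by omega
    have hcast : (k.descFactorial (i+1) : ℝ) = (k.descFactorial i : ℝ) * ((k - i : ℕ) : ℝ) := by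
      rw [Nat.descFactorial_succ]; push_cast; ring
    rw [hsub, hcast]
    ring_nf

theorem iteratedDeriv_monomial_zero (c : F) {i k : ℕ} (h : i < k) :
    iteratedDeriv i (fun t : ℝ => t^k • c) 0 = 0 := by
  rw [iteratedDeriv_monomial c i k h.le]
  simp [zero_pow (by omega : k - i ≠ 0)]

theorem iteratedDeriv_monomial_self (c : F) (k : ℕ) :
    iteratedDeriv k (fun t : ℝ => t^k • c) 0 = (k.factorial : ℝ) • c := by
  rw [iteratedDeriv_monomial c k k le_rfl]
  simp [Nat.descFactorial_self]

end Jets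

section JetComp
universe u
variable {E : Type u} [NormedAddCommGroup E] [NormedSpace ℝ E]

theorem iteratedDeriv_sub' {F : Type*} [NormedAddCommGroup F] [NormedSpace ℝ F]
    {n : ℕ} {f g : ℝ → F} (hf : ContDiff ℝ (⊤:ℕ∞) f)
    (hg : ContDiff ℝ (⊤:ℕ∞) g) (x : ℝ) :
    iteratedDeriv n (fun t => f t - g t) x = iteratedDeriv n f x - iteratedDeriv n g x := by
  have := iteratedDerivWithin_sub (Set.mem_univ x) uniqueDiffOn_univ
    (f := f) (g := g) ((hf.cdOn n) x (Set.mem_univ x)) ((hg.cdOn n) x (Set.mem_univ x))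
  simpa [iteratedDerivWithin_univ, Pi.sub_def] using this

theorem jet_comp_diff : ∀ (J : ℕ), ∀ {F : Type u} [NormedAddCommGroup F] [NormedSpace ℝ F]
    (Y : E → F) (u w : ℝ → E), ContDiff ℝ (⊤:ℕ∞) Y → ContDiff ℝ (⊤:ℕ∞) u →
    ContDiff ℝ (⊤:ℕ∞) w →
    (∀ i, i ≤ J → iteratedDeriv i (fun t => u t - w t) 0 = 0) →
    ∀ j, j ≤ J → iteratedDeriv j (fun t => Y (u t) - Y (w t)) 0 = 0 := by
  intro J
  induction J with
  | zero =>
    intro F _ _ Y u w hY hu hw hjet j hj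
    rw [Nat.le_zero] at hj; subst hj
    have h0 : u 0 = w 0 := by
      have := hjet 0 le_rfl; simpa [iteratedDeriv_zero, sub_eq_zero] using this
    simp [iteratedDeriv_zero, h0]
  | succ J IH =>
    intro F _ _ Y u w hY hu hw hjet j hj
    have h0 : u 0 = w 0 := by
      have := hjet 0 (Nat.zero_le _); simp [iteratedDeriv_zero, sub_eq_zero] at this; exact this
    match j with
    | 0 => simp [iteratedDeriv_zero, h0]
    | (i+1) =>
      have hi : i ≤ J := Nat.succ_le_succ_iff.mp hj
      have hfY : ContDiff ℝ (⊤:ℕ∞) (fderiv ℝ Y) := (contDiff_infty_iff_fderiv.1 hY).2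
      have hAu : ContDiff ℝ (⊤:ℕ∞) (fun t => fderiv ℝ Y (u t)) := hfY.comp hu
      have hAw : ContDiff ℝ (⊤:ℕ∞) (fun t => fderiv ℝ Y (w t)) := hfY.comp hw
      have hu' := contDiff_deriv1 hu
      have hw' := contDiff_deriv1 hw
      rw [iteratedDeriv_succ']
      have hd : deriv (fun t => Y (u t) - Y (w t)) = fun t =>
          (fderiv ℝ Y (u t)) (deriv u t - deriv w t) +
          (fderiv ℝ Y (u t) - fderiv ℝ Y (w t)) (deriv w t) := by
        funext t
        have h1 : HasDerivAt (fun t => Y (u t)) (fderiv ℝ Y (u t) (deriv u t)) t :=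
          (hY.diffble (u t)).hasFDerivAt.comp_hasDerivAt t (hu.diffble t).hasDerivAt
        have h2 : HasDerivAt (fun t => Y (w t)) (fderiv ℝ Y (w t) (deriv w t)) t :=
          (hY.diffble (w t)).hasFDerivAt.comp_hasDerivAt t (hw.diffble t).hasDerivAt
        rw [deriv_fun_sub h1.differentiableAt h2.differentiableAt, h1.deriv, h2.deriv]
        simp only [ContinuousLinearMap.sub_apply, map_sub]
        abel
      rw [hd, iteratedDeriv_add' (hAu.clm_apply (hu'.sub hw')) ((hAu.sub hAw).clm_apply hw')]
      have hvder : (fun t => deriv u t - deriv w t) = deriv (fun t => u t - w t) := by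
        funext t; exact (deriv_fun_sub (hu.diffble t) (hw.diffble t)).symm
      have h1 := jet_pair_right J (fun t => fderiv ℝ Y (u t)) (fun t => deriv u t - deriv w t)
        hAu (hu'.sub hw')
        (fun i' hi' => by
          rw [hvder, ← iteratedDeriv_succ']
          exact hjet (i'+1) (Nat.succ_le_succ hi')) i hi
      have hjets : ∀ i', i' ≤ J → iteratedDeriv i'
          (fun t => fderiv ℝ Y (u t) - fderiv ℝ Y (w t)) 0 = 0 :=
        IH (fderiv ℝ Y) u w hfY hu hw (fun i' hi' => hjet i' (hi'.trans (Nat.le_succ J)))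
      have h2 := jet_pair_left J (fun t => fderiv ℝ Y (u t) - fderiv ℝ Y (w t))
        (fun t => deriv w t) (hAu.sub hAw) hw' hjets i hi
      rw [h1, h2, add_zero]

end JetComp

section Flow
variable {n : ℕ} {E : Type*} [NormedAddCommGroup E] [NormedSpace ℝ E]

/-- Derivative in the time direction for functions on `ℝ × ℝⁿ`. -/
noncomputable def Dt (G : ℝ × Rn n → E) : ℝ × Rn n → E :=
  fun p => fderiv ℝ G p ((1:ℝ), (0 : Rn n))

theorem Dt_contDiff {G : ℝ × Rn n → E} (hG : ContDiff ℝ (⊤:ℕ∞) G) :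
    ContDiff ℝ (⊤:ℕ∞) (Dt G) :=
  (contDiff_infty_iff_fderiv.1 hG).2.clm_apply contDiff_const

theorem Dt_iterate_contDiff {G : ℝ × Rn n → E} (hG : ContDiff ℝ (⊤:ℕ∞) G) (k : ℕ) :
    ContDiff ℝ (⊤:ℕ∞) (Dt^[k] G) := by
  induction k generalizing G with
  | zero => exact hG
  | succ k IH => rw [Function.iterate_succ_apply]; exact IH (Dt_contDiff hG)

theorem contDiff_slice {G : ℝ × Rn n → E} (hG : ContDiff ℝ (⊤:ℕ∞) G) (x : Rn n) :
    ContDiff ℝ (⊤:ℕ∞) (fun t : ℝ => G (t, x)) :=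
  hG.comp (contDiff_id.prodMk contDiff_const)

theorem Dt_slice {G : ℝ × Rn n → E} (hG : ContDiff ℝ (⊤:ℕ∞) G) (t : ℝ) (x : Rn n) :
    Dt G (t, x) = deriv (fun s : ℝ => G (s, x)) t := by
  have hfun : (fun s : ℝ => G (s, x)) =
      fun s : ℝ => G (((0:ℝ), x) + s • ((1:ℝ), (0 : Rn n))) := by
    funext s; congr 1
    simp [Prod.ext_iff]
  rw [hfun, deriv_line ((0:ℝ), x) ((1:ℝ), (0:Rn n)) t (by
    exact (hG.diffble _))]
  simp [Dt, Prod.ext_iff]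

theorem Dt_iterate_slice {G : ℝ × Rn n → E} (hG : ContDiff ℝ (⊤:ℕ∞) G) (k : ℕ) (t : ℝ)
    (x : Rn n) : Dt^[k] G (t, x) = iteratedDeriv k (fun s : ℝ => G (s, x)) t := by
  induction k generalizing t with
  | zero => simp [iteratedDeriv_zero]
  | succ k IH =>
    rw [Function.iterate_succ_apply', Dt_slice (Dt_iterate_contDiff hG k) t x]
    have : (fun s : ℝ => Dt^[k] G (s, x)) = iteratedDeriv k (fun s : ℝ => G (s, x)) := by
      funext s; exact IH s
    rw [this, ← iteratedDeriv_succ]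

/-- Approximate flow of a vector field: `flowP X k (t, x)` is a polynomial in `t` of degree `k`
solving the flow ODE of `X` to order `k` in `t` at `t = 0`. -/
noncomputable def flowP (X : Rn n → Rn n) : ℕ → ℝ × Rn n → Rn n
  | 0 => Prod.snd
  | (k+1) => fun p => flowP X k p + p.1^(k+1) •
      ((-(((k+1).factorial : ℝ))⁻¹) •
        (Dt^[k] (fun q => Dt (flowP X k) q - X (flowP X k q))) (0, p.2))

theorem flowP_contDiff {X : Rn n → Rn n} (hX : ContDiff ℝ (⊤:ℕ∞) X) (k : ℕ) :
    ContDiff ℝ (⊤:ℕ∞) (flowP X k) := by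
  induction k with
  | zero => exact contDiff_snd
  | succ k IH =>
    refine IH.add ((contDiff_fst.pow _).smul (ContDiff.const_smul _ ?_))
    exact (Dt_iterate_contDiff ((Dt_contDiff IH).sub (hX.comp IH)) k).comp
      (contDiff_const.prodMk contDiff_snd)

theorem flowP_zero_eval {X : Rn n → Rn n} (k : ℕ) (x : Rn n) : flowP X k (0, x) = x := by
  induction k with
  | zero => rfl
  | succ k IH => simp [flowP, IH, zero_pow]

end Flow

section FlowJet
variable {n : ℕ} {E : Type*} [NormedAddCommGroup E] [NormedSpace ℝ E]

theorem iteratedDeriv_csmul {F : Type*} [NormedAddCommGroup F] [NormedSpace ℝ F]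
    {f : ℝ → F} (hf : ContDiff ℝ (⊤:ℕ∞) f) (c : ℝ) (i : ℕ) (x : ℝ) :
    iteratedDeriv i (fun t => c • f t) x = c • iteratedDeriv i f x := by
  have := iteratedDerivWithin_const_smul (Set.mem_univ x) uniqueDiffOn_univ c ((hf.cdOn i) x (Set.mem_univ x))
  simpa [iteratedDerivWithin_univ] using this

theorem flowP_slice_contDiff {X : Rn n → Rn n} (hX : ContDiff ℝ (⊤:ℕ∞) X) (k : ℕ) (x : Rn n) :
    ContDiff ℝ (⊤:ℕ∞) (fun t : ℝ => flowP X k (t, x)) :=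
  contDiff_slice (flowP_contDiff hX k) x

theorem flowP_error_contDiff {X : Rn n → Rn n} (hX : ContDiff ℝ (⊤:ℕ∞) X) (k : ℕ) :
    ContDiff ℝ (⊤:ℕ∞) (fun q => Dt (flowP X k) q - X (flowP X k q)) :=
  (Dt_contDiff (flowP_contDiff hX k)).sub (hX.comp (flowP_contDiff hX k))

theorem flowP_error_jet {X : Rn n → Rn n} (hX : ContDiff ℝ (⊤:ℕ∞) X) :
    ∀ (k : ℕ) (x : Rn n) (i : ℕ), i < k →
    iteratedDeriv i (fun t : ℝ => Dt (flowP X k) (t, x) - X (flowP X k (t, x))) 0 = 0 := by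
  intro k
  induction k with
  | zero => intro x i hi; omega
  | succ k IH =>
    intro x i hi
    have hi' : i ≤ k := Nat.lt_succ_iff.mp hi
    set Pk := flowP X k with hPk
    set b : Rn n := (-(((k+1).factorial : ℝ))⁻¹) •
      (Dt^[k] (fun q => Dt Pk q - X (Pk q))) (0, x) with hb
    have hsk : ContDiff ℝ (⊤:ℕ∞) (fun t : ℝ => Pk (t, x)) := flowP_slice_contDiff hX k x
    have hsk1fun : (fun t : ℝ => flowP X (k+1) (t, x)) = fun t => Pk (t, x) + t^(k+1) • b := rfl
    have hsk1 : ContDiff ℝ (⊤:ℕ∞) (fun t : ℝ => flowP X (k+1) (t, x)) :=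
      flowP_slice_contDiff hX (k+1) x
    have hek : ContDiff ℝ (⊤:ℕ∞) (fun t : ℝ => Dt Pk (t, x) - X (Pk (t, x))) :=
      contDiff_slice (flowP_error_contDiff hX k) x
    have hmono : ContDiff ℝ (⊤:ℕ∞) (fun t : ℝ => ((k+1 : ℕ) * t^k : ℝ) • b) :=
      (ContDiff.mul contDiff_const (contDiff_id.pow k)).smul contDiff_const
    have hdfun : (fun t : ℝ => Dt (flowP X (k+1)) (t, x) - X (flowP X (k+1) (t, x))) =
        fun t => ((Dt Pk (t, x) - X (Pk (t, x))) + ((k+1 : ℕ) * t^k : ℝ) • b) -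
          (X (flowP X (k+1) (t, x)) - X (Pk (t, x))) := by
      funext t
      have h1 : Dt (flowP X (k+1)) (t, x) = deriv (fun s : ℝ => flowP X (k+1) (s, x)) t :=
        Dt_slice (flowP_contDiff hX (k+1)) t x
      have h2 : deriv (fun s : ℝ => flowP X (k+1) (s, x)) t
          = Dt Pk (t, x) + ((k+1 : ℕ) * t^k : ℝ) • b := by
        rw [hsk1fun]
        rw [deriv_fun_add (hsk.diffble t) (((differentiable_pow (k+1)).smul_const b) t)]
        congr 1
        · exact (Dt_slice (flowP_contDiff hX k) t x).symm
        · rw [deriv_smul_const ((differentiable_pow (k+1)) t), deriv_pow_field]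
          norm_num
      rw [h1, h2]
      abel
    have hXsk1 : ContDiff ℝ (⊤:ℕ∞) (fun t : ℝ => X (flowP X (k+1) (t, x))) := hX.comp hsk1
    have hXsk : ContDiff ℝ (⊤:ℕ∞) (fun t : ℝ => X (Pk (t, x))) := hX.comp hsk
    rw [hdfun]
    rw [iteratedDeriv_sub' (hek.add hmono) (hXsk1.sub hXsk),
      iteratedDeriv_add' hek hmono]
    have hdiffjet : ∀ i', i' ≤ k →
        iteratedDeriv i' (fun t : ℝ => flowP X (k+1) (t, x) - Pk (t, x)) 0 = 0 := by
      intro i' hi''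
      have : (fun t : ℝ => flowP X (k+1) (t, x) - Pk (t, x)) = fun t : ℝ => t^(k+1) • b := by
        funext t
        show Pk (t, x) + t^(k+1) • b - Pk (t, x) = t^(k+1) • b
        abel
      rw [this]
      exact iteratedDeriv_monomial_zero b (Nat.lt_succ_of_le hi'')
    have hcomp : iteratedDeriv i
        (fun t : ℝ => X (flowP X (k+1) (t, x)) - X (Pk (t, x))) 0 = 0 :=
      jet_comp_diff k X _ _ hX hsk1 hsk hdiffjet i hi'
    have hmonoval : iteratedDeriv i (fun t : ℝ => ((k+1 : ℕ) * t^k : ℝ) • b) 0 =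
        if i = k then ((k+1 : ℕ) : ℝ) • (k.factorial : ℝ) • b else 0 := by
      have hrw : (fun t : ℝ => ((k+1 : ℕ) * t^k : ℝ) • b) =
          fun t : ℝ => ((k+1 : ℕ) : ℝ) • (t^k • b) := by
        funext t; exact mul_smul _ _ _
      have hsmooth : ContDiff ℝ (⊤:ℕ∞) (fun t : ℝ => t^k • b) :=
        (contDiff_id.pow k).smul contDiff_const
      rw [hrw, iteratedDeriv_csmul hsmooth _ i 0]
      rcases eq_or_ne i k with h | h
      · subst h; simp [iteratedDeriv_monomial_self]
      · have : i < k := lt_of_le_of_ne hi' h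
        simp [iteratedDeriv_monomial_zero b this, h]
    rw [hcomp, hmonoval]
    rcases eq_or_ne i k with h | h
    · subst h
      have hW : iteratedDeriv i (fun t : ℝ => Dt Pk (t, x) - X (Pk (t, x))) 0 =
          (Dt^[i] (fun q => Dt Pk q - X (Pk q))) (0, x) :=
        (Dt_iterate_slice (flowP_error_contDiff hX i) i 0 x).symm
      rw [hW, if_pos rfl, hb, smul_smul, smul_smul]
      have h1 : (((i+1).factorial : ℕ) : ℝ) = ((i+1 : ℕ) : ℝ) * ((i.factorial : ℕ) : ℝ) := by
        rw [Nat.factorial_succ]; push_cast; ring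
      have h2 : (((i+1).factorial : ℕ) : ℝ) ≠ 0 := by
        exact_mod_cast (Nat.factorial_pos (i+1)).ne'
      have hfac : ((i+1 : ℕ) : ℝ) * ((i.factorial : ℕ) : ℝ) * -((((i+1).factorial : ℕ) : ℝ))⁻¹
          = -1 := by
        rw [← h1, mul_neg, mul_inv_cancel₀ h2]
      rw [hfac]
      simp
    · have : i < k := lt_of_le_of_ne hi' h
      rw [IH x i this, if_neg h]
      simp

theorem flowP_main {X : Rn n → Rn n} (hX : ContDiff ℝ (⊤:ℕ∞) X) (K : ℕ) :
    ∀ (j : ℕ), j ≤ K → ∀ (h : Rn n → E), ContDiff ℝ (⊤:ℕ∞) h → ∀ (x : Rn n),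
    iteratedDeriv j (fun t : ℝ => h (flowP X K (t, x))) 0 = (vfApply X)^[j] h x := by
  intro j
  induction j with
  | zero => intro _ h _ x; simp [iteratedDeriv_zero, flowP_zero_eval]
  | succ j IH =>
    intro hjK h hh x
    have hjK' : j ≤ K := (Nat.le_succ j).trans hjK
    have hKpos : 0 < K := Nat.lt_of_lt_of_le (Nat.succ_pos j) hjK
    have hs : ContDiff ℝ (⊤:ℕ∞) (fun t : ℝ => flowP X K (t, x)) := flowP_slice_contDiff hX K x
    rw [iteratedDeriv_succ']
    have hd : deriv (fun t : ℝ => h (flowP X K (t, x))) = fun t =>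
        (vfApply X h) (flowP X K (t, x)) +
        (fderiv ℝ h (flowP X K (t, x))) (Dt (flowP X K) (t, x) - X (flowP X K (t, x))) := by
      funext t
      have h1 : HasDerivAt (fun t : ℝ => h (flowP X K (t, x)))
          (fderiv ℝ h (flowP X K (t, x)) (deriv (fun s : ℝ => flowP X K (s, x)) t)) t :=
        (hh.diffble _).hasFDerivAt.comp_hasDerivAt t (hs.diffble t).hasDerivAt
      rw [h1.deriv]
      rw [show deriv (fun s : ℝ => flowP X K (s, x)) t = Dt (flowP X K) (t, x) from
        (Dt_slice (flowP_contDiff hX K) t x).symm, map_sub]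
      show _ = (fderiv ℝ h (flowP X K (t, x))) (X (flowP X K (t, x))) + _
      abel
    rw [hd]
    have hsm1 : ContDiff ℝ (⊤:ℕ∞) (fun t : ℝ => (vfApply X h) (flowP X K (t, x))) :=
      (vfApply_contDiff hX hh).comp hs
    have hsm2 : ContDiff ℝ (⊤:ℕ∞) (fun t : ℝ =>
        (fderiv ℝ h (flowP X K (t, x)))
          (Dt (flowP X K) (t, x) - X (flowP X K (t, x)))) :=
      (((contDiff_infty_iff_fderiv.1 hh).2.comp hs).clm_apply
        (contDiff_slice (flowP_error_contDiff hX K) x))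
    rw [iteratedDeriv_add' hsm1 hsm2]
    have hA := IH hjK' (vfApply X h) (vfApply_contDiff hX hh) x
    have hB := jet_pair_right (K-1) (fun t : ℝ => fderiv ℝ h (flowP X K (t, x)))
      (fun t : ℝ => Dt (flowP X K) (t, x) - X (flowP X K (t, x)))
      ((contDiff_infty_iff_fderiv.1 hh).2.comp hs)
      (contDiff_slice (flowP_error_contDiff hX K) x)
      (fun i' hi' => flowP_error_jet hX K x i' (by omega))
      j (by omega)
    rw [hA, hB, add_zero, ← Function.iterate_succ_apply]

end FlowJet

section NestD
variable {m : ℕ}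

/-- Partial derivative of a function on `ℝᵐ` in the `i`-th coordinate direction. -/
noncomputable def pd (i : Fin m) (F : Rn m → ℝ) : Rn m → ℝ :=
  fun t => fderiv ℝ F t (Pi.single i 1)

/-- Nested partial derivatives: the head of the list acts outermost. -/
noncomputable def nestD : List (Fin m) → (Rn m → ℝ) → Rn m → ℝ
  | [], F => F
  | i :: l, F => pd i (nestD l F)

theorem pd_contDiff {F : Rn m → ℝ} (hF : ContDiff ℝ (⊤:ℕ∞) F) (i : Fin m) :
    ContDiff ℝ (⊤:ℕ∞) (pd i F) :=
  (contDiff_infty_iff_fderiv.1 hF).2.clm_apply contDiff_const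

theorem pd_iterate_contDiff {F : Rn m → ℝ} (hF : ContDiff ℝ (⊤:ℕ∞) F) (i : Fin m) (α : ℕ) :
    ContDiff ℝ (⊤:ℕ∞) ((pd i)^[α] F) := by
  induction α generalizing F with
  | zero => exact hF
  | succ α IH => rw [Function.iterate_succ_apply]; exact IH (pd_contDiff hF i)

theorem nestD_contDiff {F : Rn m → ℝ} (hF : ContDiff ℝ (⊤:ℕ∞) F) :
    ∀ L : List (Fin m), ContDiff ℝ (⊤:ℕ∞) (nestD L F) := by
  intro L
  induction L with
  | nil => exact hF
  | cons i l IH => exact pd_contDiff IH i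

theorem nestD_append (L₁ L₂ : List (Fin m)) (F : Rn m → ℝ) :
    nestD (L₁ ++ L₂) F = nestD L₁ (nestD L₂ F) := by
  induction L₁ with
  | nil => rfl
  | cons i l IH =>
    simp only [List.cons_append, nestD]
    exact congrArg (pd i) IH

theorem nestD_replicate (i : Fin m) (α : ℕ) (F : Rn m → ℝ) :
    nestD (List.replicate α i) F = (pd i)^[α] F := by
  induction α with
  | zero => rfl
  | succ α IH => rw [List.replicate_succ, Function.iterate_succ_apply']; simp only [nestD, IH]

theorem update_eq_line (t : Rn m) (i : Fin m) (s : ℝ) :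
    Function.update t i s = Function.update t i 0 + s • (Pi.single i (1:ℝ) : Rn m) := by
  funext j
  rcases eq_or_ne j i with h | h
  · subst h; simp
  · simp [Function.update_apply, h, Pi.single_apply]

theorem pd_slice {F : Rn m → ℝ} (hF : Differentiable ℝ F) (i : Fin m) (t : Rn m) :
    pd i F t = deriv (fun s => F (Function.update t i s)) (t i) := by
  have hfun : (fun s => F (Function.update t i s)) =
      fun s => F (Function.update t i 0 + s • (Pi.single i (1:ℝ) : Rn m)) := by
    funext s; rw [update_eq_line]
  rw [hfun, deriv_line _ _ _ (hF _)]
  rw [← update_eq_line, Function.update_eq_self]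
  rfl

theorem contDiff_update_slice {F : Rn m → ℝ} (hF : ContDiff ℝ (⊤:ℕ∞) F) (i : Fin m) (t : Rn m) :
    ContDiff ℝ (⊤:ℕ∞) (fun s => F (Function.update t i s)) := by
  have hfun : (fun s => F (Function.update t i s)) =
      fun s => F (Function.update t i 0 + s • (Pi.single i (1:ℝ) : Rn m)) := by
    funext s; rw [update_eq_line]
  rw [hfun]
  exact contDiff_line hF _ _

theorem pd_iterate_slice {F : Rn m → ℝ} (hF : ContDiff ℝ (⊤:ℕ∞) F) (i : Fin m) :
    ∀ (α : ℕ) (t : Rn m),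
    (pd i)^[α] F t = iteratedDeriv α (fun s => F (Function.update t i s)) (t i) := by
  intro α
  induction α with
  | zero => intro t; simp [iteratedDeriv_zero, Function.update_eq_self]
  | succ α IH =>
    intro t
    rw [Function.iterate_succ_apply', pd_slice ((pd_iterate_contDiff hF i α).diffble) i t]
    have hfun : (fun s => (pd i)^[α] F (Function.update t i s)) =
        fun s => iteratedDeriv α (fun s' => F (Function.update t i s')) s := by
      funext s
      rw [IH (Function.update t i s)]
      simp [Function.update_idem]
    rw [hfun, ← iteratedDeriv_succ]

theorem pd_comm {F : Rn m → ℝ} (hF : ContDiff ℝ (⊤:ℕ∞) F) (i j : Fin m) (t : Rn m) :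
    pd i (pd j F) t = pd j (pd i F) t := by
  have hdF : Differentiable ℝ (fderiv ℝ F) := (contDiff_infty_iff_fderiv.1 hF).2.diffble
  have hpd : ∀ (v w : Rn m),
      fderiv ℝ (fun y => fderiv ℝ F y v) t w = fderiv ℝ (fderiv ℝ F) t w v := by
    intro v w
    rw [fderiv_clm_apply (hdF t) (differentiableAt_const v)]
    simp
  show fderiv ℝ (fun y => fderiv ℝ F y (Pi.single j 1)) t (Pi.single i 1) = _
  rw [hpd]
  have hsymm := second_derivative_symmetric_of_eventually
    (f := F) (f' := fderiv ℝ F) (f'' := fderiv ℝ (fderiv ℝ F) t) (x := t)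
    (Filter.Eventually.of_forall fun y => (hF.diffble y).hasFDerivAt)
    (hdF t).hasFDerivAt (Pi.single i 1) (Pi.single j 1)
  rw [hsymm]
  rw [← hpd]
  rfl

theorem nestD_perm {L L' : List (Fin m)} (hp : L.Perm L') {F : Rn m → ℝ}
    (hF : ContDiff ℝ (⊤:ℕ∞) F) : nestD L F = nestD L' F := by
  induction hp with
  | nil => rfl
  | cons x h ih => simp only [nestD, ih]
  | swap x y l =>
    funext t
    exact pd_comm (nestD_contDiff hF l) y x t
  | trans h1 h2 ih1 ih2 => rw [ih1, ih2]

end NestD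

section Curve
variable {n mm : ℕ}

/-- Composition of approximate flows: `curveC Xl N p₀ s t` applies flows for variables
`s-1, s-2, …, 0` (variable `s-1` is the outermost flow around `p₀`... actually innermost). -/
noncomputable def curveC (Xl : Fin mm → Rn n → Rn n) (N : ℕ) (p₀ : Rn n) : ℕ → Rn mm → Rn n
  | 0 => fun _ => p₀
  | (s+1) => fun t => if h : s < mm then
      flowP (Xl ⟨s, h⟩) N (t ⟨s, h⟩, curveC Xl N p₀ s t) else curveC Xl N p₀ s t

theorem curveC_contDiff {Xl : Fin mm → Rn n → Rn n} (hXl : ∀ i, ContDiff ℝ (⊤:ℕ∞) (Xl i))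
    (N : ℕ) (p₀ : Rn n) : ∀ s, ContDiff ℝ (⊤:ℕ∞) (curveC Xl N p₀ s) := by
  intro s
  induction s with
  | zero => exact contDiff_const
  | succ s IH =>
    by_cases h : s < mm
    · simp only [curveC, dif_pos h]
      exact (flowP_contDiff (hXl _) N).comp
        (((ContinuousLinearMap.proj (R := ℝ) (⟨s, h⟩ : Fin mm)).contDiff).prodMk IH)
    · simp only [curveC, dif_neg h]; exact IH

theorem curveC_indep {Xl : Fin mm → Rn n → Rn n} {N : ℕ} {p₀ : Rn n} :
    ∀ (s : ℕ) (t t' : Rn mm), (∀ i : Fin mm, (i:ℕ) < s → t i = t' i) →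
    curveC Xl N p₀ s t = curveC Xl N p₀ s t' := by
  intro s
  induction s with
  | zero => intro t t' _; rfl
  | succ s IH =>
    intro t t' hco
    by_cases h : s < mm
    · simp only [curveC, dif_pos h]
      rw [hco ⟨s, h⟩ (Nat.lt_succ_self s), IH t t' (fun i hi => hco i (hi.trans (Nat.lt_succ_self s)))]
    · simp only [curveC, dif_neg h]
      exact IH t t' (fun i hi => hco i (hi.trans (Nat.lt_succ_self s)))

/-- Zero out coordinate `v`. -/
noncomputable def iotaL (mm : ℕ) (v : Fin mm) : Rn mm →L[ℝ] Rn mm :=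
  ContinuousLinearMap.pi (fun j => if j = v then 0 else ContinuousLinearMap.proj j)

theorem iotaL_apply {v : Fin mm} (t : Rn mm) : iotaL mm v t = Function.update t v 0 := by
  funext j
  rcases eq_or_ne j v with h | h
  · subst h; simp [iotaL]
  · simp [iotaL, h, Function.update_apply]

theorem iotaL_single {v i : Fin mm} (h : i ≠ v) :
    iotaL mm v (Pi.single i (1:ℝ)) = Pi.single i (1:ℝ) := by
  rw [iotaL_apply]
  funext j
  rcases eq_or_ne j v with hj | hj
  · subst hj
    simp [Function.update_self, Pi.single_apply, (Ne.symm h)]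
  · simp [Function.update_apply, hj]

theorem nestD_iota {v : Fin mm} {G : Rn mm → ℝ} (hG : ContDiff ℝ (⊤:ℕ∞) G) :
    ∀ L : List (Fin mm), (∀ x ∈ L, x ≠ v) →
    nestD L (fun t => G (iotaL mm v t)) = fun t => nestD L G (iotaL mm v t) := by
  intro L
  induction L with
  | nil => intro _; rfl
  | cons i l IH =>
    intro hL
    have hIH := IH (fun x hx => hL x (List.mem_cons_of_mem i hx))
    show pd i (nestD l (fun t => G (iotaL mm v t))) = _
    rw [hIH]
    funext t
    have hnd : Differentiable ℝ (nestD l G) := (nestD_contDiff hG l).diffble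
    have hcomp : fderiv ℝ (fun t => nestD l G (iotaL mm v t)) t =
        (fderiv ℝ (nestD l G) (iotaL mm v t)).comp (iotaL mm v) :=
      ((hnd (iotaL mm v t)).hasFDerivAt.comp t (iotaL mm v).hasFDerivAt).fderiv
    show fderiv ℝ (fun t => nestD l G (iotaL mm v t)) t (Pi.single i 1) = _
    rw [hcomp]
    simp only [ContinuousLinearMap.coe_comp', Function.comp_apply]
    rw [iotaL_single (hL i (List.mem_cons_self))]
    rfl

/-- The resulting differential operator applied to `h`. -/
noncomputable def OpwD (Xl : Fin mm → Rn n → Rn n) (α : Fin mm → ℕ) :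
    ℕ → (Rn n → ℝ) → (Rn n → ℝ)
  | 0 => fun h => h
  | (s+1) => fun h => OpwD Xl α s
      (if hlt : s < mm then (vfApply (Xl ⟨s, hlt⟩))^[α ⟨s, hlt⟩] h else h)

/-- The canonical (sorted) list of variables with multiplicities `α`. -/
def Lalpha (α : Fin mm → ℕ) : ℕ → List (Fin mm)
  | 0 => []
  | (s+1) => Lalpha α s ++ (if hlt : s < mm then List.replicate (α ⟨s, hlt⟩) ⟨s, hlt⟩ else [])

theorem Lalpha_mem {α : Fin mm → ℕ} : ∀ (s : ℕ) (x : Fin mm), x ∈ Lalpha α s → (x:ℕ) < s := by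
  intro s
  induction s with
  | zero => intro x hx; simp [Lalpha] at hx
  | succ s IH =>
    intro x hx
    simp only [Lalpha, List.mem_append] at hx
    rcases hx with hx | hx
    · exact (IH x hx).trans (Nat.lt_succ_self s)
    · by_cases h : s < mm
      · rw [dif_pos h] at hx
        have := List.eq_of_mem_replicate hx
        subst this
        exact Nat.lt_succ_self s
      · rw [dif_neg h] at hx; simp at hx

theorem vfApply_iter_contDiff {X : Rn n → Rn n} (hX : ContDiff ℝ (⊤:ℕ∞) X)
    {h : Rn n → ℝ} (hh : ContDiff ℝ (⊤:ℕ∞) h) (j : ℕ) :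
    ContDiff ℝ (⊤:ℕ∞) ((vfApply X)^[j] h) := by
  induction j generalizing h with
  | zero => exact hh
  | succ j IH => rw [Function.iterate_succ_apply]; exact IH (vfApply_contDiff hX hh)

theorem curveC_main {Xl : Fin mm → Rn n → Rn n} (hXl : ∀ i, ContDiff ℝ (⊤:ℕ∞) (Xl i))
    {N : ℕ} {p₀ : Rn n} {α : Fin mm → ℕ} (hα : ∀ i, α i ≤ N) :
    ∀ s, s ≤ mm → ∀ (h : Rn n → ℝ), ContDiff ℝ (⊤:ℕ∞) h →
    nestD (Lalpha α s) (fun t => h (curveC Xl N p₀ s t)) 0 = OpwD Xl α s h p₀ := by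
  intro s
  induction s with
  | zero => intro _ h _; rfl
  | succ s IH =>
    intro hs h hh
    have hlt : s < mm := hs
    set vs : Fin mm := ⟨s, hlt⟩ with hvs
    have hcs := curveC_contDiff hXl N p₀ s
    have hcs1 := curveC_contDiff hXl N p₀ (s+1)
    have hG : ContDiff ℝ (⊤:ℕ∞) (fun t => h (curveC Xl N p₀ (s+1) t)) := hh.comp hcs1
    have hh' : ContDiff ℝ (⊤:ℕ∞) ((vfApply (Xl vs))^[α vs] h) :=
      vfApply_iter_contDiff (hXl vs) hh (α vs)
    show nestD (Lalpha α (s+1)) _ 0 = _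
    have hL1 : Lalpha α (s+1) = Lalpha α s ++ List.replicate (α vs) vs := by
      simp only [Lalpha, dif_pos hlt]; rfl
    rw [hL1, nestD_append, nestD_replicate]
    have hkey : ∀ t : Rn mm, ((pd vs)^[α vs] (fun t => h (curveC Xl N p₀ (s+1) t)))
        (iotaL mm vs t) = ((vfApply (Xl vs))^[α vs] h) (curveC Xl N p₀ s t) := by
      intro t
      rw [pd_iterate_slice hG vs (α vs) (iotaL mm vs t)]
      have h0 : (iotaL mm vs t) vs = 0 := by rw [iotaL_apply]; simp
      have hfun : (fun sv => (fun t => h (curveC Xl N p₀ (s+1) t))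
          (Function.update (iotaL mm vs t) vs sv)) =
          fun sv => h (flowP (Xl vs) N (sv, curveC Xl N p₀ s t)) := by
        funext sv
        rw [iotaL_apply, Function.update_idem]
        have hc1 : curveC Xl N p₀ (s+1) (Function.update t vs sv) =
            flowP (Xl vs) N ((Function.update t vs sv) vs, curveC Xl N p₀ s (Function.update t vs sv)) := by
          simp only [curveC, dif_pos hlt]; rfl
        show h (curveC Xl N p₀ (s+1) (Function.update t vs sv)) = _
        rw [hc1, Function.update_self]
        have harg : curveC Xl N p₀ s (Function.update t vs sv) = curveC Xl N p₀ s t := by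
          refine curveC_indep s _ t ?_
          intro i hi
          have hvsval : (vs:ℕ) = s := rfl
          have hine : i ≠ vs := by
            intro hcon; rw [hcon, hvsval] at hi; omega
          exact Function.update_of_ne hine sv t
        rw [harg]
      rw [h0, hfun]
      exact flowP_main (hXl vs) N (α vs) (hα vs) h hh (curveC Xl N p₀ s t)
    have hmem : ∀ x ∈ Lalpha α s, x ≠ vs := by
      intro x hx
      have hxs := Lalpha_mem s x hx
      have hvsval : (vs:ℕ) = s := rfl
      intro hcon; rw [hcon, hvsval] at hxs; omega
    have hstep : nestD (Lalpha α s) ((pd vs)^[α vs]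
        (fun t => h (curveC Xl N p₀ (s+1) t))) 0 =
        nestD (Lalpha α s) (fun t => ((vfApply (Xl vs))^[α vs] h) (curveC Xl N p₀ s t)) 0 := by
      have hGsm := pd_iterate_contDiff hG vs (α vs)
      have h1 := nestD_iota hGsm (Lalpha α s) hmem
      have h2 : (fun t => ((pd vs)^[α vs] (fun t => h (curveC Xl N p₀ (s+1) t)))
          (iotaL mm vs t)) = fun t => ((vfApply (Xl vs))^[α vs] h) (curveC Xl N p₀ s t) := by
        funext t; exact hkey t
      calc nestD (Lalpha α s) ((pd vs)^[α vs] (fun t => h (curveC Xl N p₀ (s+1) t))) 0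
          = nestD (Lalpha α s) ((pd vs)^[α vs] (fun t => h (curveC Xl N p₀ (s+1) t)))
            (iotaL mm vs 0) := by rw [map_zero]
        _ = nestD (Lalpha α s) (fun t => ((pd vs)^[α vs]
            (fun t => h (curveC Xl N p₀ (s+1) t))) (iotaL mm vs t)) 0 := by rw [h1]
        _ = _ := by rw [h2]
    rw [hstep, IH (le_of_lt hs) _ hh']
    show _ = OpwD Xl α (s+1) h p₀
    simp only [OpwD, dif_pos hlt]; rfl

end Curve

section Small
variable {m : ℕ}

theorem nestD_shift {F : Rn m → ℝ} (hF : ContDiff ℝ (⊤:ℕ∞) F) (c : Rn m) :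
    ∀ l : List (Fin m), nestD l (fun x => F (x + c)) = fun x => nestD l F (x + c) := by
  intro l
  induction l with
  | nil => rfl
  | cons i l IH =>
    show pd i (nestD l (fun x => F (x + c))) = _
    rw [IH]
    funext x
    have hd : Differentiable ℝ (nestD l F) := (nestD_contDiff hF l).diffble
    have htr : HasFDerivAt (fun x : Rn m => x + c) (ContinuousLinearMap.id ℝ (Rn m)) x :=
      (hasFDerivAt_id x).add_const c
    have : fderiv ℝ (fun x => nestD l F (x + c)) x =
        (fderiv ℝ (nestD l F) (x + c)).comp (ContinuousLinearMap.id ℝ (Rn m)) :=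
      ((hd (x + c)).hasFDerivAt.comp x htr).fderiv
    show fderiv ℝ (fun x => nestD l F (x + c)) x (Pi.single i 1) = _
    rw [this]
    rfl

theorem nestD_sub {F G : Rn m → ℝ} (hF : ContDiff ℝ (⊤:ℕ∞) F) (hG : ContDiff ℝ (⊤:ℕ∞) G) :
    ∀ l : List (Fin m), nestD l (fun x => F x - G x) = fun x => nestD l F x - nestD l G x := by
  intro l
  induction l with
  | nil => rfl
  | cons i l IH =>
    show pd i (nestD l (fun x => F x - G x)) = _
    rw [IH]
    funext x
    show fderiv ℝ (fun x => nestD l F x - nestD l G x) x (Pi.single i 1) = _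
    rw [fderiv_fun_sub ((nestD_contDiff hF l).diffble x) ((nestD_contDiff hG l).diffble x)]
    rfl

theorem small_of_nestD_zero : ∀ (M : ℕ) (F : Rn m → ℝ), ContDiff ℝ (⊤:ℕ∞) F →
    (∀ L : List (Fin m), L.length ≤ M → nestD L F 0 = 0) →
    ∀ ε : ℝ, 0 < ε → ∃ δ : ℝ, 0 < δ ∧ ∀ t : Rn m, ‖t‖ ≤ δ → |F t| ≤ ε * ‖t‖ ^ M := by
  intro M
  induction M with
  | zero =>
    intro F hF hvan ε hε
    have h0 : F 0 = 0 := hvan [] (by simp)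
    have hc : ContinuousAt F 0 := hF.continuous.continuousAt
    rcases Metric.continuousAt_iff.1 hc ε hε with ⟨δ, hδ, hball⟩
    refine ⟨δ/2, by linarith, fun t ht => ?_⟩
    have : dist t 0 < δ := by
      rw [dist_zero_right]; linarith
    have := hball this
    rw [h0, dist_zero_right] at this
    simp only [pow_zero, mul_one]
    exact le_of_lt (by simpa using this)
  | succ M IH =>
    intro F hF hvan ε hε
    by_cases hm : m = 0
    · refine ⟨1, one_pos, fun t _ => ?_⟩
      have ht0 : t = 0 := by subst hm; exact funext fun i => i.elim0
      have h0 : F 0 = 0 := hvan [] (by simp)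
      rw [ht0, h0]
      have : (0:ℝ) ≤ ε * ‖(0:Rn m)‖ ^ (M+1) := by positivity
      simpa using this
    · have hmpos : 0 < m := Nat.pos_of_ne_zero hm
      have hε' : 0 < ε / m := by positivity
      have hpd : ∀ i : Fin m, ∃ δ : ℝ, 0 < δ ∧ ∀ t : Rn m, ‖t‖ ≤ δ →
          |pd i F t| ≤ (ε / m) * ‖t‖ ^ M := by
        intro i
        refine IH (pd i F) (pd_contDiff hF i) (fun L hL => ?_) (ε / m) hε'
        have : nestD (L ++ [i]) F 0 = 0 := hvan (L ++ [i]) (by simp; omega)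
        rwa [nestD_append] at this
      choose δf hδf hbound using hpd
      have hne : (Finset.univ : Finset (Fin m)).Nonempty := by
        refine Finset.univ_nonempty_iff.2 ?_
        exact Fin.pos_iff_nonempty.mp hmpos
      set δ := Finset.univ.inf' hne δf with hδdef
      have hδpos : 0 < δ := by
        rw [hδdef, Finset.lt_inf'_iff]
        exact fun i _ => hδf i
      refine ⟨δ, hδpos, fun t ht => ?_⟩
      have hFt : ‖F t - F 0‖ ≤ (m * ((ε/m) * ‖t‖ ^ M)) * ‖t - 0‖ := by
        refine Convex.norm_image_sub_le_of_norm_fderiv_le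
          (f := F) (s := Metric.closedBall (0 : Rn m) ‖t‖)
          (fun y _ => hF.diffble y)
          (fun y hy => ?_) (convex_closedBall _ _) (Metric.mem_closedBall_self (norm_nonneg t))
          (by simp [Metric.mem_closedBall, dist_zero_right])
        have hyt : ‖y‖ ≤ ‖t‖ := by
          simpa [Metric.mem_closedBall, dist_zero_right] using hy
        refine ContinuousLinearMap.opNorm_le_bound _ (by positivity) (fun u => ?_)
        have hudecomp : u = ∑ i : Fin m, u i • (Pi.single i (1:ℝ) : Rn m) := by
          funext j
          rw [Finset.sum_apply]
          simp [Pi.single_apply]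
        have happ : fderiv ℝ F y u = ∑ i : Fin m, u i • pd i F y := by
          conv_lhs => rw [hudecomp]
          rw [map_sum]
          congr 1
          funext i
          rw [(fderiv ℝ F y).map_smul]
          rfl
        rw [happ]
        calc |∑ i : Fin m, u i • pd i F y| ≤ ∑ i : Fin m, |u i • pd i F y| :=
              Finset.abs_sum_le_sum_abs _ _
          _ ≤ ∑ i : Fin m, ‖u‖ * ((ε/m) * ‖t‖ ^ M) := by
              refine Finset.sum_le_sum (fun i _ => ?_)
              rw [smul_eq_mul, abs_mul]
              have h1 : |u i| ≤ ‖u‖ := by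
                have := norm_le_pi_norm u i
                simpa [Real.norm_eq_abs] using this
              have h2 : |pd i F y| ≤ (ε/m) * ‖t‖ ^ M := by
                have hyi : ‖y‖ ≤ δf i := le_trans hyt (le_trans ht (Finset.inf'_le δf (Finset.mem_univ i)))
                refine le_trans (hbound i y hyi) ?_
                have := pow_le_pow_left₀ (norm_nonneg y) hyt M
                have hεm : 0 ≤ ε / m := le_of_lt hε'
                exact mul_le_mul_of_nonneg_left this hεm
              exact mul_le_mul h1 h2 (abs_nonneg _) (norm_nonneg u)
          _ = (m * ((ε/m) * ‖t‖ ^ M)) * ‖u‖ := by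
              rw [Finset.sum_const, Finset.card_univ, Fintype.card_fin]
              ring
      have h0 : F 0 = 0 := hvan [] (by simp)
      rw [h0, sub_zero, sub_zero] at hFt
      have heq : (m:ℝ) * ((ε/m) * ‖t‖ ^ M) * ‖t‖ = ε * ‖t‖ ^ (M+1) := by
        have : (m:ℝ) ≠ 0 := Nat.cast_ne_zero.2 hm
        field_simp
        ring
      rw [heq] at hFt
      simpa [Real.norm_eq_abs] using hFt

end Small

section BoxDiff
variable {m : ℕ}

/-- Iterated finite difference over the directions in `l`, with step `h`. -/
noncomputable def boxDiff (h : ℝ) : List (Fin m) → (Rn m → ℝ) → Rn m → ℝ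
  | [], F => F
  | i :: l, F => boxDiff h l (fun x => F (x + h • (Pi.single i (1:ℝ) : Rn m)) - F x)

theorem boxDiff_bound {h : ℝ} (hh : 0 ≤ h) :
    ∀ (l : List (Fin m)), l.Nodup → ∀ (F : Rn m → ℝ) (x₀ : Rn m) (M : ℝ),
    (∀ x : Rn m, (∀ j, (j ∈ l → x j - x₀ j ∈ Set.Icc 0 h) ∧ (j ∉ l → x j = x₀ j)) → |F x| ≤ M) →
    |boxDiff h l F x₀| ≤ 2 ^ l.length * M := by
  intro l
  induction l with
  | nil =>
    intro _ F x₀ M hbox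
    have := hbox x₀ (fun j => ⟨fun hj => absurd hj (List.not_mem_nil), fun _ => rfl⟩)
    simpa [boxDiff] using this
  | cons i l IH =>
    intro hnd F x₀ M hbox
    have hinl : i ∉ l := (List.nodup_cons.1 hnd).1
    have hndl : l.Nodup := (List.nodup_cons.1 hnd).2
    show |boxDiff h l (fun x => F (x + h • (Pi.single i (1:ℝ) : Rn m)) - F x) x₀| ≤ _
    have hkey := IH hndl (fun x => F (x + h • (Pi.single i (1:ℝ) : Rn m)) - F x) x₀ (2*M) ?_
    · calc |boxDiff h l _ x₀| ≤ 2 ^ l.length * (2*M) := hkey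
        _ = 2 ^ (i :: l).length * M := by
          simp [List.length_cons, pow_succ]
          ring
    · intro x hx
      have hx1 : ∀ j, (j ∈ i :: l → (x + h • (Pi.single i (1:ℝ) : Rn m)) j - x₀ j ∈ Set.Icc 0 h)
          ∧ (j ∉ i :: l → (x + h • (Pi.single i (1:ℝ) : Rn m)) j = x₀ j) := by
        intro j
        constructor
        · intro hj
          rcases eq_or_ne j i with hji | hji
          · subst hji
            have hxj : x j = x₀ j := (hx j).2 (by simpa [hinl] using hinl)
            simp [Pi.single_apply, hxj, hh]
          · have hj' : j ∈ l := by
              rcases List.mem_cons.1 hj with hc | hc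
              · exact absurd hc hji
              · exact hc
            have := (hx j).1 hj'
            simpa [Pi.single_apply, hji] using this
        · intro hj
          have hji : j ≠ i := fun hc => hj (hc ▸ List.mem_cons_self)
          have hjl : j ∉ l := fun hc => hj (List.mem_cons_of_mem i hc)
          have := (hx j).2 hjl
          simpa [Pi.single_apply, hji] using this
      have hx2 : ∀ j, (j ∈ i :: l → x j - x₀ j ∈ Set.Icc 0 h) ∧ (j ∉ i :: l → x j = x₀ j) := by
        intro j
        constructor
        · intro hj
          rcases eq_or_ne j i with hji | hji
          · subst hji
            have hxj : x j = x₀ j := (hx j).2 hinl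
            simp [hxj, hh]
          · have hj' : j ∈ l := by
              rcases List.mem_cons.1 hj with hc | hc
              · exact absurd hc hji
              · exact hc
            exact (hx j).1 hj'
        · intro hj
          exact (hx j).2 (fun hc => hj (List.mem_cons_of_mem i hc))
      calc |F (x + h • (Pi.single i (1:ℝ) : Rn m)) - F x|
          ≤ |F (x + h • (Pi.single i (1:ℝ) : Rn m))| + |F x| := abs_sub _ _
        _ ≤ M + M := add_le_add (hbox _ hx1) (hbox _ hx2)
        _ = 2 * M := by ring

theorem boxDiff_eq_nestD {h : ℝ} (hh : 0 < h) :
    ∀ (l : List (Fin m)), l.Nodup → ∀ (F : Rn m → ℝ), ContDiff ℝ (⊤:ℕ∞) F → ∀ (x₀ : Rn m),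
    ∃ ζ : Rn m, (∀ j, ζ j - x₀ j ∈ Set.Icc 0 h ∧ (j ∉ l → ζ j = x₀ j)) ∧
    boxDiff h l F x₀ = h ^ l.length * nestD l F ζ := by
  intro l
  induction l with
  | nil =>
    intro _ F _ x₀
    exact ⟨x₀, fun j => ⟨by simp [le_of_lt hh], fun _ => rfl⟩, by simp [boxDiff, nestD]⟩
  | cons i l IH =>
    intro hnd F hF x₀
    have hinl : i ∉ l := (List.nodup_cons.1 hnd).1
    have hndl : l.Nodup := (List.nodup_cons.1 hnd).2
    set e : Rn m := Pi.single i (1:ℝ) with he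
    have hFs : ContDiff ℝ (⊤:ℕ∞) (fun x : Rn m => F (x + h • e)) :=
      hF.comp (contDiff_id.add contDiff_const)
    have hF' : ContDiff ℝ (⊤:ℕ∞) (fun x => F (x + h • e) - F x) := hFs.sub hF
    rcases IH hndl _ hF' x₀ with ⟨ζ', hζ', heq⟩
    have hnsub : nestD l (fun x => F (x + h • e) - F x) =
        fun x => nestD l F (x + h • e) - nestD l F x := by
      rw [nestD_sub hFs hF l, nestD_shift hF (h • e) l]
    have hφ : ∀ sv : ℝ, HasDerivAt (fun sv : ℝ => nestD l F (ζ' + sv • e))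
        (pd i (nestD l F) (ζ' + sv • e)) sv := by
      intro sv
      exact hasDerivAt_line ζ' e sv ((nestD_contDiff hF l).diffble _)
    rcases exists_hasDerivAt_eq_slope (fun sv : ℝ => nestD l F (ζ' + sv • e))
      (fun sv => pd i (nestD l F) (ζ' + sv • e)) hh
      ((contDiff_line (nestD_contDiff hF l) ζ' e).continuous.continuousOn)
      (fun sv _ => hφ sv) with ⟨θ, hθmem, hθ⟩
    refine ⟨ζ' + θ • e, ?_, ?_⟩
    · intro j
      rcases eq_or_ne j i with hji | hji
      · subst hji
        have hζj : ζ' j = x₀ j := (hζ' j).2 hinl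
        constructor
        · simp only [Pi.add_apply, Pi.smul_apply, he, Pi.single_eq_same, smul_eq_mul, mul_one, hζj]
          constructor
          · have := hθmem.1; linarith [hθmem.1]
          · linarith [hθmem.2]
        · intro hj
          exact absurd (List.mem_cons_self) hj
      · have hej : e j = 0 := by simp [he, Pi.single_apply, hji]
        constructor
        · simp only [Pi.add_apply, Pi.smul_apply, hej, smul_eq_mul, mul_zero, add_zero]
          exact (hζ' j).1
        · intro hj
          have hjl : j ∉ l := fun hc => hj (List.mem_cons_of_mem i hc)
          simp only [Pi.add_apply, Pi.smul_apply, hej, smul_eq_mul, mul_zero, add_zero]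
          exact (hζ' j).2 hjl
    · show boxDiff h l (fun x => F (x + h • e) - F x) x₀ = _
      rw [heq, hnsub]
      have hslope : nestD l F (ζ' + h • e) - nestD l F ζ' = h * pd i (nestD l F) (ζ' + θ • e) := by
        have h1 : pd i (nestD l F) (ζ' + θ • e) =
            (nestD l F (ζ' + h • e) - nestD l F (ζ' + (0:ℝ) • e)) / (h - 0) := by
          have := hθ
          simpa using this
        rw [h1, zero_smul, add_zero, sub_zero]
        field_simp
      simp only [hslope]
      show h ^ l.length * (h * nestD (i :: l) F (ζ' + θ • e)) = _
      rw [List.length_cons, pow_succ]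
      ring

end BoxDiff

section WordD
variable {n r mm : ℕ}

/-- Iterated derivative along a word in the generating vector fields. -/
noncomputable def wordD (X : Fin r → Rn n → Rn n) (w : List (Fin r)) (h : Rn n → ℝ) : Rn n → ℝ :=
  w.foldl (fun u j => vfApply (X j) u) h

theorem wordD_cons (X : Fin r → Rn n → Rn n) (j : Fin r) (w : List (Fin r)) (h : Rn n → ℝ) :
    wordD X (j :: w) h = wordD X w (vfApply (X j) h) := rfl

theorem wordD_append (X : Fin r → Rn n → Rn n) (w₁ w₂ : List (Fin r)) (h : Rn n → ℝ) :
    wordD X (w₁ ++ w₂) h = wordD X w₂ (wordD X w₁ h) := List.foldl_append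

theorem wordD_replicate (X : Fin r → Rn n → Rn n) (c : ℕ) (j : Fin r) (h : Rn n → ℝ) :
    wordD X (List.replicate c j) h = (vfApply (X j))^[c] h := by
  induction c generalizing h with
  | zero => rfl
  | succ c IH =>
    rw [List.replicate_succ, wordD_cons, IH, ← Function.iterate_succ_apply]

theorem wordD_contDiff {X : Fin r → Rn n → Rn n} (hX : ∀ j, ContDiff ℝ (⊤:ℕ∞) (X j))
    (w : List (Fin r)) {h : Rn n → ℝ} (hh : ContDiff ℝ (⊤:ℕ∞) h) :
    ContDiff ℝ (⊤:ℕ∞) (wordD X w h) := by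
  induction w generalizing h with
  | nil => exact hh
  | cons j w IH => exact IH (vfApply_contDiff (hX j) hh)

/-- The word corresponding to the operator `OpwD`. -/
def wlistD (ltr : Fin mm → Fin r) (α : Fin mm → ℕ) : ℕ → List (Fin r)
  | 0 => []
  | (s+1) => (if hlt : s < mm then List.replicate (α ⟨s, hlt⟩) (ltr ⟨s, hlt⟩) else []) ++
      wlistD ltr α s

theorem OpwD_eq_wordD (X : Fin r → Rn n → Rn n) (ltr : Fin mm → Fin r) (α : Fin mm → ℕ) :
    ∀ (s : ℕ) (h : Rn n → ℝ),
    OpwD (fun i => X (ltr i)) α s h = wordD X (wlistD ltr α s) h := by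
  intro s
  induction s with
  | zero => intro h; rfl
  | succ s IH =>
    intro h
    by_cases hlt : s < mm
    · show OpwD (fun i => X (ltr i)) α s _ = _
      rw [dif_pos hlt, IH, wlistD, dif_pos hlt, wordD_append, wordD_replicate]
    · show OpwD (fun i => X (ltr i)) α s _ = _
      rw [dif_neg hlt, IH, wlistD, dif_neg hlt, List.nil_append]

theorem wlistD_length (ltr : Fin mm → Fin r) (α : Fin mm → ℕ) :
    ∀ s, (wlistD ltr α s).length = (Lalpha α s).length := by
  intro s
  induction s with
  | zero => rfl
  | succ s IH =>
    show ((if hlt : s < mm then _ else _) ++ wlistD ltr α s).length = _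
    rw [List.length_append]
    show _ = (Lalpha α s ++ (if hlt : s < mm then _ else _)).length
    rw [List.length_append]
    by_cases hlt : s < mm
    · rw [dif_pos hlt, dif_pos hlt]
      simp [IH]
      omega
    · rw [dif_neg hlt, dif_neg hlt]
      simp [IH]

theorem Lalpha_count (α : Fin mm → ℕ) :
    ∀ (s : ℕ) (j : Fin mm), (Lalpha α s).count j = if (j:ℕ) < s then α j else 0 := by
  intro s
  induction s with
  | zero => intro j; simp [Lalpha]
  | succ s IH =>
    intro j
    show (Lalpha α s ++ (if hlt : s < mm then _ else _)).count j = _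
    rw [List.count_append, IH j]
    by_cases hlt : s < mm
    · rw [dif_pos hlt, List.count_replicate]
      rcases eq_or_ne j (⟨s, hlt⟩ : Fin mm) with hj | hj
      · subst hj
        simp only [if_pos rfl]
        simp
      · have hjs : (j:ℕ) ≠ s := by
          intro hc; exact hj (Fin.ext hc)
        have hbeq : ¬ ((⟨s, hlt⟩ : Fin mm) = j) := fun hc => hj hc.symm
        simp only [beq_iff_eq, if_neg hbeq, add_zero]
        have hiff : ((j:ℕ) < s + 1) ↔ ((j:ℕ) < s) := by omega
        rw [if_congr hiff rfl rfl]
    · rw [dif_neg hlt]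
      have hjlt : (j:ℕ) < s := by
        have := j.isLt; omega
      simp [hjlt, Nat.lt_succ_of_lt hjlt]

theorem Lalpha_perm (L : List (Fin mm)) :
    L.Perm (Lalpha (fun i => L.count i) mm) := by
  rw [List.perm_iff_count]
  intro j
  rw [Lalpha_count]
  simp [j.isLt]

theorem Lalpha_ones_length : ∀ s, s ≤ mm → (Lalpha (fun _ : Fin mm => 1) s).length = s := by
  intro s
  induction s with
  | zero => intro _; rfl
  | succ s IH =>
    intro hs
    have hlt : s < mm := hs
    show (Lalpha _ s ++ _).length = _
    rw [List.length_append, dif_pos hlt, IH (le_of_lt hlt)]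
    simp

theorem Lalpha_ones_nodup : ∀ s, (Lalpha (fun _ : Fin mm => 1) s).Nodup := by
  intro s
  induction s with
  | zero => exact List.nodup_nil
  | succ s IH =>
    show (Lalpha _ s ++ _).Nodup
    by_cases hlt : s < mm
    · rw [dif_pos hlt]
      rw [List.nodup_append]
      refine ⟨IH, by simp, ?_⟩
      intro x hx
      have hxs := Lalpha_mem s x hx
      simp only [List.replicate_one, List.mem_singleton]
      intro y hy hc
      rw [hc, hy] at hxs
      exact absurd hxs (by simp)
    · rw [dif_neg hlt]
      simpa using IH

end WordD

theorem curveC_zero {n mm : ℕ} {Xl : Fin mm → Rn n → Rn n} {N : ℕ} {p₀ : Rn n} :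
    ∀ s, curveC Xl N p₀ s 0 = p₀ := by
  intro s
  induction s with
  | zero => rfl
  | succ s IH =>
    by_cases h : s < mm
    · simp only [curveC, dif_pos h, IH]
      have : (0 : Rn mm) ⟨s, h⟩ = (0:ℝ) := rfl
      rw [this, flowP_zero_eval]
    · simp only [curveC, dif_neg h, IH]

/-- The core squeeze theorem for word derivatives of globally smooth data. -/
theorem core_squeeze {n r : ℕ} {X : Fin r → Rn n → Rn n} (hX : ∀ j, ContDiff ℝ (⊤:ℕ∞) (X j))
    {f g : Rn n → ℝ} (hf : ContDiff ℝ (⊤:ℕ∞) f) (hg : ContDiff ℝ (⊤:ℕ∞) g) {p₀ : Rn n}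
    (hfg : ∀ᶠ x in 𝓝 p₀, 0 ≤ f x ∧ f x ≤ g x) (m : ℕ)
    (hvan : ∀ w : List (Fin r), w.length ≤ m → wordD X w g p₀ = 0) :
    ∀ w : List (Fin r), w.length ≤ m → wordD X w f p₀ = 0 := by
  have hgp0 : g p₀ = 0 := by
    have := hvan [] (by simp)
    exact this
  have hfp0 : f p₀ = 0 := by
    have hp := hfg.self_of_nhds
    have h1 := hp.1
    have h2 := hp.2
    linarith [hgp0 ▸ h2]
  intro w hw
  rcases Nat.eq_zero_or_pos w.length with hk0 | hkpos
  · rw [List.length_eq_zero_iff] at hk0; subst hk0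
    exact hfp0
  · set k := w.length with hk
    have hkm : k ≤ m := hw
    have hm1 : 1 ≤ m := le_trans hkpos hkm
    have hltridx : ∀ i : Fin k, k - 1 - (i:ℕ) < k := by
      intro i; omega
    set ltr : Fin k → Fin r := fun i => w.get ⟨k - 1 - (i:ℕ), hltridx i⟩ with hltr
    have hXl : ∀ i : Fin k, ContDiff ℝ (⊤:ℕ∞) ((fun i => X (ltr i)) i) := fun i => hX _
    set γ : Rn k → Rn n := curveC (fun i => X (ltr i)) m p₀ k with hγ
    have hγs : ContDiff ℝ (⊤:ℕ∞) γ := curveC_contDiff hXl m p₀ k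
    have hFf : ContDiff ℝ (⊤:ℕ∞) (fun t => f (γ t)) := hf.comp hγs
    have hFg : ContDiff ℝ (⊤:ℕ∞) (fun t => g (γ t)) := hg.comp hγs
    -- all nested partials of g ∘ γ vanish at 0 up to order m
    have hFgvan : ∀ L : List (Fin k), L.length ≤ m → nestD L (fun t => g (γ t)) 0 = 0 := by
      intro L hL
      have hperm := Lalpha_perm L
      rw [nestD_perm hperm hFg]
      have hαc : ∀ i : Fin k, (fun i => L.count i) i ≤ m :=
        fun i => le_trans List.count_le_length hL
      rw [hγ, curveC_main hXl hαc k le_rfl g hg, OpwD_eq_wordD X ltr _ k]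
      apply hvan
      rw [wlistD_length]
      calc (Lalpha (fun i => L.count i) k).length = L.length := hperm.length_eq.symm
        _ ≤ m := hL
    -- f ∘ γ at the all-ones multi-index gives the word derivative of f
    have hones : ∀ i : Fin k, (fun _ : Fin k => 1) i ≤ m := fun _ => hm1
    have hdrop : ∀ s, s ≤ k → wlistD ltr (fun _ : Fin k => 1) s = List.drop (k - s) w := by
      intro s
      induction s with
      | zero =>
        intro _
        show [] = List.drop (k - 0) w
        rw [Nat.sub_zero, hk, List.drop_length]
      | succ s IH =>
        intro hs
        have hlt : s < k := hs
        show (if hlt' : s < k then List.replicate 1 (ltr ⟨s, hlt'⟩) else []) ++ _ = _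
        rw [dif_pos hlt, IH (le_of_lt hlt), List.replicate_one, List.singleton_append]
        have hidx : k - (s+1) < w.length := by omega
        rw [List.drop_eq_getElem_cons hidx]
        have hget : ∀ (a b : ℕ) (ha : a < w.length) (hb : b < w.length), a = b →
            w[a]'ha = w[b]'hb := by
          intro a b ha hb hab; subst hab; rfl
        congr 1
        · exact hget _ _ _ _ (by show k - 1 - s = k - (s+1); omega)
        · congr 1
          show k - s = (k - (s+1)) + 1
          omega
    have hwordf : wordD X w f p₀ =
        nestD (Lalpha (fun _ : Fin k => 1) k) (fun t => f (γ t)) 0 := by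
      rw [hγ, curveC_main hXl hones k le_rfl f hf, OpwD_eq_wordD X ltr _ k,
        hdrop k le_rfl, Nat.sub_self, List.drop_zero]
    rw [hwordf]
    -- now the finite-difference limit argument
    set Lones := Lalpha (fun _ : Fin k => 1) k with hLones
    have hLlen : Lones.length = k := Lalpha_ones_length k le_rfl
    have hLnodup : Lones.Nodup := Lalpha_ones_nodup k
    have hnest_cont : ContinuousAt (nestD Lones (fun t => f (γ t))) 0 :=
      (nestD_contDiff hFf Lones).continuous.continuousAt
    have hγ0 : γ 0 = p₀ := curveC_zero k
    -- region where 0 ≤ f ∘ γ ≤ g ∘ γ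
    have hregion : ∀ᶠ t in 𝓝 (0 : Rn k), 0 ≤ f (γ t) ∧ f (γ t) ≤ g (γ t) := by
      have htend : Filter.Tendsto γ (𝓝 0) (𝓝 p₀) := by
        rw [← hγ0]
        exact hγs.continuous.continuousAt
      exact htend.eventually hfg
    rcases Metric.eventually_nhds_iff.1 hregion with ⟨δ₀, hδ₀pos, hδ₀⟩
    -- conclude by showing the value is smaller than every ε
    have hsmall : ∀ ε : ℝ, 0 < ε →
        |nestD Lones (fun t => f (γ t)) 0| ≤ (2^k + 1) * ε := by
      intro ε hε
      rcases small_of_nestD_zero m (fun t => g (γ t)) hFg hFgvan ε hε with ⟨δ₁, hδ₁pos, hδ₁⟩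
      rcases Metric.continuousAt_iff.1 hnest_cont ε hε with ⟨δ₂, hδ₂pos, hδ₂⟩
      set h : ℝ := min (min (δ₀/2) δ₁) (min (δ₂/2) 1) with hdef
      have hpos : 0 < h := by
        apply lt_min <;> [apply lt_min; apply lt_min] <;> linarith
      have hle1 : h ≤ 1 := le_trans (min_le_right _ _) (min_le_right _ _)
      have hleδ₀ : h < δ₀ := lt_of_le_of_lt (le_trans (min_le_left _ _) (min_le_left _ _)) (by linarith)
      have hleδ₁ : h ≤ δ₁ := le_trans (min_le_left _ _) (min_le_right _ _)
      have hleδ₂ : h < δ₂ := lt_of_le_of_lt (le_trans (min_le_right _ _) (min_le_left _ _)) (by linarith)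
      rcases boxDiff_eq_nestD hpos Lones hLnodup (fun t => f (γ t)) hFf 0 with ⟨ζ, hζbox, hζeq⟩
      have hζnorm : ‖ζ‖ ≤ h := by
        rw [pi_norm_le_iff_of_nonneg (le_of_lt hpos)]
        intro i
        have := (hζbox i).1
        simp only [Pi.zero_apply, sub_zero] at this
        rw [Real.norm_eq_abs, abs_le]
        exact ⟨by linarith [this.1], this.2⟩
      -- bound the box difference
      have hbox : |boxDiff h Lones (fun t => f (γ t)) 0| ≤ 2^k * (ε * h^m) := by
        have := boxDiff_bound (le_of_lt hpos) Lones hLnodup (fun t => f (γ t)) 0 (ε * h^m) ?_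
        · rwa [hLlen] at this
        · intro x hx
          have hxnorm : ‖x‖ ≤ h := by
            rw [pi_norm_le_iff_of_nonneg (le_of_lt hpos)]
            intro i
            rw [Real.norm_eq_abs, abs_le]
            by_cases hmem : i ∈ Lones
            · have := (hx i).1 hmem
              simp only [Pi.zero_apply, sub_zero] at this
              exact ⟨by linarith [this.1], this.2⟩
            · have := (hx i).2 hmem
              simp only [Pi.zero_apply] at this
              rw [this]
              constructor <;> linarith
          have hfx : 0 ≤ f (γ x) ∧ f (γ x) ≤ g (γ x) := by
            apply hδ₀
            rw [dist_zero_right]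
            exact lt_of_le_of_lt hxnorm hleδ₀
          have hgb : |g (γ x)| ≤ ε * ‖x‖^m := hδ₁ x (le_trans hxnorm hleδ₁)
          have : |f (γ x)| ≤ ε * h^m := by
            rw [abs_of_nonneg hfx.1]
            calc f (γ x) ≤ g (γ x) := hfx.2
              _ ≤ |g (γ x)| := le_abs_self _
              _ ≤ ε * ‖x‖^m := hgb
              _ ≤ ε * h^m := by
                  apply mul_le_mul_of_nonneg_left _ (le_of_lt hε)
                  exact pow_le_pow_left₀ (norm_nonneg x) hxnorm m
          exact this
      -- hence the nested derivative at ζ is small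
      have hnestζ : |nestD Lones (fun t => f (γ t)) ζ| ≤ 2^k * ε := by
        have hk0 : (0:ℝ) < h^k := pow_pos hpos k
        have hbox2 : h^k * |nestD Lones (fun t => f (γ t)) ζ| ≤ 2^k * (ε * h^m) := by
          rw [hζeq, hLlen, abs_mul, abs_of_nonneg (le_of_lt hk0)] at hbox
          exact hbox
        have hmk : h^m ≤ h^k := pow_le_pow_of_le_one (le_of_lt hpos) hle1 hkm
        have h2 : |nestD Lones (fun t => f (γ t)) ζ| * h^k ≤ (2^k * ε) * h^k := by
          calc |nestD Lones (fun t => f (γ t)) ζ| * h^k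
              = h^k * |nestD Lones (fun t => f (γ t)) ζ| := mul_comm _ _
            _ ≤ 2^k * (ε * h^m) := hbox2
            _ ≤ 2^k * (ε * h^k) := mul_le_mul_of_nonneg_left
                (mul_le_mul_of_nonneg_left hmk (le_of_lt hε)) (by positivity)
            _ = (2^k * ε) * h^k := by ring
        exact le_of_mul_le_mul_right h2 hk0
      have hclose : |nestD Lones (fun t => f (γ t)) 0 - nestD Lones (fun t => f (γ t)) ζ| ≤ ε := by
        have := hδ₂ (x := ζ) (by rw [dist_zero_right]; exact lt_of_le_of_lt hζnorm hleδ₂)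
        rw [Real.dist_eq] at this
        rw [abs_sub_comm]
        exact le_of_lt this
      have htri : |nestD Lones (fun t => f (γ t)) 0| ≤
          |nestD Lones (fun t => f (γ t)) 0 - nestD Lones (fun t => f (γ t)) ζ| +
          |nestD Lones (fun t => f (γ t)) ζ| := by
        have := abs_add_le (nestD Lones (fun t => f (γ t)) 0 - nestD Lones (fun t => f (γ t)) ζ)
          (nestD Lones (fun t => f (γ t)) ζ)
        simpa using this
      calc |nestD Lones (fun t => f (γ t)) 0|
          ≤ |nestD Lones (fun t => f (γ t)) 0 - nestD Lones (fun t => f (γ t)) ζ| +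
            |nestD Lones (fun t => f (γ t)) ζ| := htri
        _ ≤ ε + 2^k * ε := add_le_add hclose hnestζ
        _ = (2^k + 1) * ε := by ring
    by_contra hne
    have habs : 0 < |nestD Lones (fun t => f (γ t)) 0| := abs_pos.2 hne
    have hval := hsmall (|nestD Lones (fun t => f (γ t)) 0| / (2 * (2^k + 1))) (by positivity)
    have heq2 : ((2:ℝ)^k + 1) * (|nestD Lones (fun t => f (γ t)) 0| / (2 * (2^k + 1))) =
        |nestD Lones (fun t => f (γ t)) 0| / 2 := by
      have h2k : (0:ℝ) < 2^k + 1 := by positivity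
      field_simp
    rw [heq2] at hval
    linarith

section Assembly
variable {n r : ℕ}

theorem vfApply_congr_on {V : Set (Rn n)} (hV : IsOpen V) {Y Z : Rn n → Rn n}
    {h₁ h₂ : Rn n → ℝ} (hYZ : ∀ x ∈ V, Y x = Z x) (hh : ∀ x ∈ V, h₁ x = h₂ x) :
    ∀ x ∈ V, vfApply Y h₁ x = vfApply Z h₂ x := by
  intro x hx
  have hev : h₁ =ᶠ[𝓝 x] h₂ := Filter.eventuallyEq_of_mem (hV.mem_nhds hx) hh
  show fderiv ℝ h₁ x (Y x) = fderiv ℝ h₂ x (Z x)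
  rw [hev.fderiv_eq, hYZ x hx]

theorem wordD_congr_on {V : Set (Rn n)} (hV : IsOpen V) {Xt X : Fin r → Rn n → Rn n}
    (hXe : ∀ j, ∀ x ∈ V, Xt j x = X j x) :
    ∀ (w : List (Fin r)) (h₁ h₂ : Rn n → ℝ), (∀ x ∈ V, h₁ x = h₂ x) →
    ∀ x ∈ V, wordD Xt w h₁ x = wordD X w h₂ x := by
  intro w
  induction w with
  | nil => intro h₁ h₂ hh x hx; exact hh x hx
  | cons j w IH =>
    intro h₁ h₂ hh x hx
    rw [wordD_cons, wordD_cons]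
    exact IH _ _ (vfApply_congr_on hV (hXe j) hh) x hx

theorem foldD_congr_on {V : Set (Rn n)} (hV : IsOpen V) :
    ∀ (Ys : List (Rn n → Rn n)) (h₁ h₂ : Rn n → ℝ), (∀ x ∈ V, h₁ x = h₂ x) →
    ∀ x ∈ V, (Ys.foldl (fun u Y => vfApply Y u) h₁) x =
      (Ys.foldl (fun u Y => vfApply Y u) h₂) x := by
  intro Ys
  induction Ys with
  | nil => intro h₁ h₂ hh x hx; exact hh x hx
  | cons Y Ys IH =>
    intro h₁ h₂ hh x hx
    show (Ys.foldl _ (vfApply Y h₁)) x = _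
    exact IH _ _ (vfApply_congr_on hV (fun x _ => rfl) hh) x hx

/-- `u` is representable on `V` as a `C^∞` combination of word derivatives of `ft`
of length at most `K`. -/
def RepW (V : Set (Rn n)) (Xt : Fin r → Rn n → Rn n) (ft : Rn n → ℝ) (K : ℕ)
    (u : Rn n → ℝ) : Prop :=
  ∃ (q : ℕ) (ws : Fin q → List (Fin r)) (c : Fin q → Rn n → ℝ),
    (∀ i, ContDiff ℝ (⊤:ℕ∞) (c i)) ∧ (∀ i, (ws i).length ≤ K) ∧
    ∀ x ∈ V, u x = ∑ i, c i x * wordD Xt (ws i) ft x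

theorem RepW.zero {V : Set (Rn n)} {Xt : Fin r → Rn n → Rn n} {ft : Rn n → ℝ} {K : ℕ} :
    RepW V Xt ft K (0 : Rn n → ℝ) :=
  ⟨0, Fin.elim0, Fin.elim0, fun i => i.elim0, fun i => i.elim0, fun x _ => by simp⟩

theorem RepW.add {V : Set (Rn n)} {Xt : Fin r → Rn n → Rn n} {ft : Rn n → ℝ} {K : ℕ}
    {u₁ u₂ : Rn n → ℝ} (h₁ : RepW V Xt ft K u₁) (h₂ : RepW V Xt ft K u₂) :
    RepW V Xt ft K (u₁ + u₂) := by
  obtain ⟨q₁, ws₁, c₁, hc₁, hl₁, he₁⟩ := h₁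
  obtain ⟨q₂, ws₂, c₂, hc₂, hl₂, he₂⟩ := h₂
  refine ⟨q₁ + q₂, Fin.append ws₁ ws₂, Fin.append c₁ c₂, ?_, ?_, ?_⟩
  · intro i
    refine Fin.addCases (fun i => ?_) (fun i => ?_) i
    · rw [Fin.append_left]; exact hc₁ i
    · rw [Fin.append_right]; exact hc₂ i
  · intro i
    refine Fin.addCases (fun i => ?_) (fun i => ?_) i
    · rw [Fin.append_left]; exact hl₁ i
    · rw [Fin.append_right]; exact hl₂ i
  · intro x hx
    rw [Fin.sum_univ_add]
    show u₁ x + u₂ x = _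
    rw [he₁ x hx, he₂ x hx]
    congr 1
    · refine Finset.sum_congr rfl (fun i _ => ?_)
      rw [Fin.append_left, Fin.append_left]
    · refine Finset.sum_congr rfl (fun i _ => ?_)
      rw [Fin.append_right, Fin.append_right]

theorem RepW.congr_on {V : Set (Rn n)} {Xt : Fin r → Rn n → Rn n} {ft : Rn n → ℝ} {K : ℕ}
    {u v : Rn n → ℝ} (h : RepW V Xt ft K u) (huv : ∀ x ∈ V, v x = u x) :
    RepW V Xt ft K v := by
  obtain ⟨q, ws, c, hc, hl, he⟩ := h
  exact ⟨q, ws, c, hc, hl, fun x hx => (huv x hx).trans (he x hx)⟩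

theorem RepW.mono {V : Set (Rn n)} {Xt : Fin r → Rn n → Rn n} {ft : Rn n → ℝ} {K K' : ℕ}
    (hKK : K ≤ K') {u : Rn n → ℝ} (h : RepW V Xt ft K u) : RepW V Xt ft K' u := by
  obtain ⟨q, ws, c, hc, hl, he⟩ := h
  exact ⟨q, ws, c, hc, fun i => (hl i).trans hKK, he⟩

theorem RepW.single {V : Set (Rn n)} {Xt : Fin r → Rn n → Rn n} {ft : Rn n → ℝ} {K : ℕ}
    {c₀ : Rn n → ℝ} (hc₀ : ContDiff ℝ (⊤:ℕ∞) c₀) {w : List (Fin r)} (hw : w.length ≤ K) :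
    RepW V Xt ft K (fun x => c₀ x * wordD Xt w ft x) :=
  ⟨1, fun _ => w, fun _ => c₀, fun _ => hc₀, fun _ => hw, fun x _ => by simp⟩

theorem RepW.fintype_sum {V : Set (Rn n)} {Xt : Fin r → Rn n → Rn n} {ft : Rn n → ℝ} {K : ℕ}
    {ι : Type*} [Fintype ι] (u : ι → (Rn n → ℝ)) (h : ∀ i, RepW V Xt ft K (u i)) :
    RepW V Xt ft K (fun x => ∑ i, u i x) := by
  have hsum : RepW V Xt ft K (∑ i, u i) :=
    Finset.sum_induction u (RepW V Xt ft K) (fun a b ha hb => ha.add hb) RepW.zero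
      (fun i _ => h i)
  refine hsum.congr_on (fun x hx => ?_)
  rw [Finset.sum_apply]

end Assembly

section StepA
variable {n r : ℕ}

theorem wordD_concat (Xt : Fin r → Rn n → Rn n) (w : List (Fin r)) (j : Fin r) (h : Rn n → ℝ) :
    wordD Xt (w ++ [j]) h = vfApply (Xt j) (wordD Xt w h) := by
  rw [wordD_append]
  rfl

theorem RepW.foldD {V : Set (Rn n)} (hV : IsOpen V) {Xt : Fin r → Rn n → Rn n}
    (hXt : ∀ j, ContDiff ℝ (⊤:ℕ∞) (Xt j)) {ft f : Rn n → ℝ} (hft : ContDiff ℝ (⊤:ℕ∞) ft)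
    (hf : ∀ x ∈ V, f x = ft x) :
    ∀ Ys : List (Rn n → Rn n),
    (∀ Y ∈ Ys, ∃ a : Fin r → Rn n → ℝ, (∀ j, ContDiff ℝ (⊤:ℕ∞) (a j)) ∧
      ∀ x ∈ V, Y x = ∑ j, a j x • Xt j x) →
    RepW V Xt ft Ys.length (Ys.foldl (fun u Y => vfApply Y u) f) := by
  intro Ys
  induction Ys using List.reverseRecOn with
  | nil =>
    intro _
    refine (RepW.single (V := V) (Xt := Xt) (ft := ft) (c₀ := fun _ => (1:ℝ))
      contDiff_const (w := ([] : List (Fin r))) le_rfl).congr_on (fun x hx => ?_)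
    show f x = (1:ℝ) * wordD Xt [] ft x
    rw [one_mul]
    exact hf x hx
  | append_singleton Ys Y IH =>
    intro hmem
    obtain ⟨q, ws, c, hc, hl, he⟩ := IH (fun Y' h' => hmem Y' (List.mem_append_left _ h'))
    obtain ⟨a, hat, hYrep⟩ := hmem Y (List.mem_append_right _ (List.mem_singleton_self Y))
    have hW : ∀ i, ContDiff ℝ (⊤:ℕ∞) (wordD Xt (ws i) ft) :=
      fun i => wordD_contDiff hXt (ws i) hft
    have hΦs : ContDiff ℝ (⊤:ℕ∞) (fun y => ∑ i, c i y * wordD Xt (ws i) ft y) := by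
      apply ContDiff.sum
      intro i _
      exact (hc i).mul (hW i)
    have htarget : RepW V Xt ft (Ys.length + 1) (fun x => ∑ j : Fin r, ∑ i : Fin q,
        ((a j x * vfApply (Xt j) (c i) x) * wordD Xt (ws i) ft x +
          (a j x * c i x) * wordD Xt (ws i ++ [j]) ft x)) := by
      refine RepW.fintype_sum _ (fun j => ?_)
      refine RepW.fintype_sum _ (fun i => ?_)
      exact RepW.add
        (RepW.single ((hat j).mul (vfApply_contDiff (hXt j) (hc i)))
          ((hl i).trans (Nat.le_succ _)))
        (RepW.single ((hat j).mul (hc i)) (by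
          rw [List.length_append, List.length_singleton]
          exact Nat.add_le_add (hl i) le_rfl))
    have hlen : (Ys ++ [Y]).length = Ys.length + 1 := by simp
    rw [hlen]
    refine htarget.congr_on (fun x hx => ?_)
    have hfold_app : ((Ys ++ [Y]).foldl (fun u Z => vfApply Z u) f) x =
        vfApply Y (Ys.foldl (fun u Z => vfApply Z u) f) x := by
      rw [List.foldl_append]
      rfl
    rw [hfold_app]
    have hev : (Ys.foldl (fun u Z => vfApply Z u) f) =ᶠ[𝓝 x]
        (fun y => ∑ i, c i y * wordD Xt (ws i) ft y) :=
      Filter.eventuallyEq_of_mem (hV.mem_nhds hx) he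
    show fderiv ℝ (Ys.foldl (fun u Z => vfApply Z u) f) x (Y x) = _
    rw [hev.fderiv_eq, hYrep x hx, map_sum]
    refine Finset.sum_congr rfl (fun j _ => ?_)
    rw [(fderiv ℝ (fun y => ∑ i, c i y * wordD Xt (ws i) ft y) x).map_smul]
    have hdm : ∀ i : Fin q, DifferentiableAt ℝ (fun y => c i y * wordD Xt (ws i) ft y) x :=
      fun i => ((hc i).diffble x).mul ((hW i).diffble x)
    have hfd : fderiv ℝ (fun y => ∑ i, c i y * wordD Xt (ws i) ft y) x =
        ∑ i, fderiv ℝ (fun y => c i y * wordD Xt (ws i) ft y) x :=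
      fderiv_fun_sum (fun i _ => hdm i)
    rw [hfd]
    rw [smul_eq_mul, ContinuousLinearMap.sum_apply, Finset.mul_sum]
    refine Finset.sum_congr rfl (fun i _ => ?_)
    rw [fderiv_fun_mul ((hc i).diffble x) ((hW i).diffble x), ContinuousLinearMap.add_apply,
      ContinuousLinearMap.smul_apply, ContinuousLinearMap.smul_apply, smul_eq_mul, smul_eq_mul,
      wordD_concat]
    show a j x * (c i x * fderiv ℝ (wordD Xt (ws i) ft) x (Xt j x)
        + wordD Xt (ws i) ft x * fderiv ℝ (c i) x (Xt j x)) =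
      (a j x * fderiv ℝ (c i) x (Xt j x)) * wordD Xt (ws i) ft x +
      (a j x * c i x) * fderiv ℝ (wordD Xt (ws i) ft) x (Xt j x)
    ring
end StepA

section Cutoff
variable {n : ℕ}

theorem cutoff_exists {U : Set (Rn n)} (hU : IsOpen U) {p₀ : Rn n} (hp₀ : p₀ ∈ U) :
    ∃ (χ : Rn n → ℝ) (V : Set (Rn n)), IsOpen V ∧ p₀ ∈ V ∧ V ⊆ U ∧
      ContDiff ℝ (⊤:ℕ∞) χ ∧ (∀ x ∈ V, χ x = 1) ∧ tsupport χ ⊆ U := by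
  rcases Metric.isOpen_iff.1 hU p₀ hp₀ with ⟨ε, hε, hball⟩
  have h1 : (0:ℝ) < ε/3 := by linarith
  have h2 : ε/3 < ε/2 := by linarith
  let φ : ContDiffBump p₀ := ⟨ε/3, ε/2, h1, h2⟩
  refine ⟨φ, Metric.ball p₀ (ε/3), Metric.isOpen_ball, Metric.mem_ball_self h1,
    ?_, ?_, ?_, ?_⟩
  · exact (Metric.ball_subset_ball (by linarith)).trans hball
  · exact φ.contDiff
  · intro x hx
    exact φ.one_of_mem_closedBall (Metric.ball_subset_closedBall hx)
  · rw [φ.tsupport_eq]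
    exact (Metric.closedBall_subset_ball (by show ε/2 < ε; linarith)).trans hball

theorem cutoff_smul_contDiff {U : Set (Rn n)} (hU : IsOpen U) {χ : Rn n → ℝ}
    (hχ : ContDiff ℝ (⊤:ℕ∞) χ) (hsupp : tsupport χ ⊆ U) {E : Type*} [NormedAddCommGroup E]
    [NormedSpace ℝ E] {a : Rn n → E} (ha : ContDiffOn ℝ (⊤:ℕ∞) a U) :
    ContDiff ℝ (⊤:ℕ∞) (fun x => χ x • a x) := by
  rw [← contDiffOn_univ]
  apply contDiffOn_of_locally_contDiffOn
  intro x _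
  by_cases hxU : x ∈ U
  · exact ⟨U, hU, hxU, ((hχ.contDiffOn).smul ha).mono Set.inter_subset_right⟩
  · refine ⟨(tsupport χ)ᶜ, (isClosed_tsupport χ).isOpen_compl, fun hc => hxU (hsupp hc), ?_⟩
    refine (contDiffOn_const (c := (0:E))).congr ?_
    intro y hy
    have hy0 : χ y = 0 := image_eq_zero_of_notMem_tsupport hy.2
    simp [hy0]

end Cutoff

/-- `Y` belongs to the `C^∞(U)`-module `𝒟` of vector fields generated by `X₁, …, X_r`. -/
def InModule {n r : ℕ} (U : Set (Rn n)) (X : Fin r → Rn n → Rn n) (Y : Rn n → Rn n) : Prop :=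
  ∃ a : Fin r → Rn n → ℝ, (∀ j, ContDiffOn ℝ (⊤ : ℕ∞) (a j) U) ∧
    ∀ x ∈ U, Y x = ∑ j, a j x • X j x

/-- The vanishing order `ν_𝒟(f)(p)`: the smallest `m` such that some iterated derivative
`Y_m(⋯(Y_1 f)⋯)(p) ≠ 0` with all `Y_i ∈ 𝒟`; `⊤` if no such `m` exists. -/
noncomputable def vanishOrder {n r : ℕ} {E : Type*} [NormedAddCommGroup E] [NormedSpace ℝ E]
    (U : Set (Rn n)) (X : Fin r → Rn n → Rn n) (f : Rn n → E) (p : Rn n) : ℕ∞ :=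
  sInf {m : ℕ∞ | ∃ Ys : List (Rn n → Rn n), (Ys.length : ℕ∞) = m ∧
    (∀ Y ∈ Ys, InModule U X Y) ∧ (Ys.foldl (fun g Y => vfApply Y g) f) p ≠ 0}

/-- If `f, g` are germs of real-valued smooth functions at `p₀` with
`0 ≤ f ≤ g` on a neighborhood of `p₀` and `f(p₀) = g(p₀)`, then `ν_𝒟(f)(p₀) ≥ ν_𝒟(g)(p₀)`. -/
theorem vanishOrder_mono {n r : ℕ} (U : Set (Rn n)) (hU : IsOpen U) (p₀ : Rn n) (hp₀ : p₀ ∈ U)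
    (X : Fin r → Rn n → Rn n) (hX : ∀ j, ContDiffOn ℝ (⊤ : ℕ∞) (X j) U)
    (hind : ∀ x ∈ U, LinearIndependent ℝ (fun j => X j x))
    (f g : Rn n → ℝ) (hf : ContDiffOn ℝ (⊤ : ℕ∞) f U) (hg : ContDiffOn ℝ (⊤ : ℕ∞) g U)
    (hfg : ∀ᶠ x in 𝓝 p₀, 0 ≤ f x ∧ f x ≤ g x) (heq : f p₀ = g p₀) :
    vanishOrder U X g p₀ ≤ vanishOrder U X f p₀ := by
  obtain ⟨χ, V, hV, hp₀V, hVU, hχs, hχ1, hχsupp⟩ := cutoff_exists hU hp₀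
  set Xt : Fin r → Rn n → Rn n := fun j x => χ x • X j x with hXtdef
  set ft : Rn n → ℝ := fun x => χ x • f x with hftdef
  set gt : Rn n → ℝ := fun x => χ x • g x with hgtdef
  have hXts : ∀ j, ContDiff ℝ (⊤:ℕ∞) (Xt j) :=
    fun j => cutoff_smul_contDiff hU hχs hχsupp (hX j)
  have hfts : ContDiff ℝ (⊤:ℕ∞) ft := cutoff_smul_contDiff hU hχs hχsupp hf
  have hgts : ContDiff ℝ (⊤:ℕ∞) gt := cutoff_smul_contDiff hU hχs hχsupp hg
  have hfeq : ∀ x ∈ V, f x = ft x := by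
    intro x hx
    rw [hftdef]
    simp [hχ1 x hx]
  have hgeq : ∀ x ∈ V, gt x = g x := by
    intro x hx
    rw [hgtdef]
    simp [hχ1 x hx]
  have hXeq : ∀ j, ∀ x ∈ V, Xt j x = X j x := by
    intro j x hx
    rw [hXtdef]
    simp [hχ1 x hx]
  apply le_sInf
  rintro b ⟨Ys, hlen, hmod, hne0⟩
  by_contra hcon
  rw [not_le] at hcon
  -- every 𝒟-list of length at most |Ys| kills g at p₀
  have hvang : ∀ Zs : List (Rn n → Rn n), (∀ Z ∈ Zs, InModule U X Z) →
      Zs.length ≤ Ys.length → (Zs.foldl (fun u Y => vfApply Y u) g) p₀ = 0 := by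
    intro Zs hZmod hZlen
    by_contra hne
    have hmem : ((Zs.length : ℕ∞)) ∈ {m : ℕ∞ | ∃ Ys' : List (Rn n → Rn n),
        (Ys'.length : ℕ∞) = m ∧ (∀ Y ∈ Ys', InModule U X Y) ∧
        (Ys'.foldl (fun u Y => vfApply Y u) g) p₀ ≠ 0} := ⟨Zs, rfl, hZmod, hne⟩
    have hsle : vanishOrder U X g p₀ ≤ (Zs.length : ℕ∞) := sInf_le hmem
    have hble : (Zs.length : ℕ∞) ≤ b := by
      rw [← hlen]
      exact_mod_cast hZlen
    exact absurd (hsle.trans hble) (not_le.2 hcon)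
  -- hence all word derivatives of g of length ≤ |Ys| vanish at p₀
  have hwordg : ∀ w : List (Fin r), w.length ≤ Ys.length → wordD X w g p₀ = 0 := by
    intro w hw
    have hXmod : ∀ j : Fin r, InModule U X (X j) := by
      intro j
      refine ⟨fun j' => fun _ => if j' = j then (1:ℝ) else 0,
        fun j' => contDiffOn_const, ?_⟩
      intro x _
      rw [show (∑ j' : Fin r, (if j' = j then (1:ℝ) else 0) • X j' x) =
        ∑ j' : Fin r, (if j' = j then X j' x else 0) from
        Finset.sum_congr rfl (fun j' _ => by rw [ite_smul, one_smul, zero_smul])]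
      rw [Finset.sum_ite_eq' Finset.univ j (fun j' => X j' x), if_pos (Finset.mem_univ j)]
    have hfold : (w.map X).foldl (fun u Y => vfApply Y u) g = wordD X w g := by
      rw [wordD, List.foldl_map]
    have := hvang (w.map X) (by
      intro Z hZ
      rcases List.mem_map.1 hZ with ⟨j, _, rfl⟩
      exact hXmod j) (by simpa using hw)
    rwa [hfold] at this
  -- transfer to the globally smooth cutoffs
  have hwordgt : ∀ w : List (Fin r), w.length ≤ Ys.length → wordD Xt w gt p₀ = 0 := by
    intro w hw
    exact (wordD_congr_on hV hXeq w gt g hgeq p₀ hp₀V).trans (hwordg w hw)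
  have hfgt : ∀ᶠ x in 𝓝 p₀, 0 ≤ ft x ∧ ft x ≤ gt x := by
    filter_upwards [hfg, hV.mem_nhds hp₀V] with x hx hxV
    rw [← hfeq x hxV, hgeq x hxV]
    exact hx
  -- the core squeeze theorem
  have hwordft := core_squeeze hXts hfts hgts hfgt Ys.length hwordgt
  -- the module fold is a combination of word derivatives
  have hrep := RepW.foldD hV hXts hfts hfeq Ys (by
    intro Y hY
    obtain ⟨a, ha, hrepU⟩ := hmod Y hY
    refine ⟨fun j => fun x => χ x • a j x,
      fun j => cutoff_smul_contDiff hU hχs hχsupp (ha j), ?_⟩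
    intro x hx
    rw [hrepU x (hVU hx)]
    refine Finset.sum_congr rfl (fun j _ => ?_)
    show a j x • X j x = (χ x • a j x) • Xt j x
    rw [hXeq j x hx, hχ1 x hx, one_smul])
  obtain ⟨q, ws, c, hc, hl, he⟩ := hrep
  refine hne0 ?_
  rw [he p₀ hp₀V]
  apply Finset.sum_eq_zero
  intro i _
  rw [hwordft (ws i) (hl i), mul_zero]
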